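/- arXiv:1811.01182 — 3 statements merged into one kernel-verified Lean document; each statement's English description precedes it below -/
import Mathlib

section
/- (Lemma 4, gradient variance bounds for SPD1-VR) In the t-th inner iteration of SPD1-VR at outer stage k, define ∇^t_{x,j_t} = a_{i'_t j_t}(y^t_{i'_t} − ỹ^k_{i'_t}) + G^k_{x,j_t} and ∇'^t_{x,j_t} = a_{i_t j_t}(ȳ^t_{i_t} − ỹ^k_{i_t}) + G^k_{x,j_t}, and symmetrically ∇^t_{y,i_t} = a_{i_t j'_t}(x^t_{j'_t} − x̃^k_{j'_t}) + G^k_{y,i_t} and ∇'^t_{y,i_t} = a_{i_t j_t}(x̄^t_{j_t} − x̃^k_{j_t}) + G^k_{y,i_t}. Then, conditioned on the σ-algebra F_t of indices sampled before iteration t, for every y ∈ Y and x ∈ X: E[(∇^t_{x,j_t} − ∇'^t_{x,j_t})² | F_t] ≤ (8R²/(nd))‖y − ỹ^k‖² + (12R²/(nd))‖y^t − y‖² + (8R²/d)·E[‖y^t − ȳ^t‖² | F_t], and E[(∇^t_{y,i_t} − ∇'^t_{y,i_t})² | F_t] ≤ (8R'²/(nd))‖x − x̃^k‖² + (12R'²/(nd))‖x^t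 − x‖² + (8R'²/n)·E[‖x^t − x̄^t‖² | F_t]. -/
/-- Real-valued restriction of the convex conjugate `φ*(y) = sup_u {y·u − φ(u)}`. -/
noncomputable def phiStar (φ : ℝ → ℝ) (y : ℝ) : ℝ :=
  sSup (Set.range fun u => y * u - φ u)

/-- Effective domain of the convex conjugate of `φ`. -/
def Ydom (φ : ℝ → ℝ) : Set ℝ :=
  {y | BddAbove (Set.range fun u => y * u - φ u)}

lemma key5 (p q r s u : ℝ) :
    (p + q + r + s + u) ^ 2 ≤ 6*p^2 + 4*q^2 + 8*r^2 + 6*s^2 + 4*u^2 := by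
  nlinarith [sq_nonneg (6*p-4*q), sq_nonneg (6*p-8*r), sq_nonneg (6*p-6*s), sq_nonneg (6*p-4*u),
    sq_nonneg (4*q-8*r), sq_nonneg (4*q-6*s), sq_nonneg (4*q-4*u), sq_nonneg (8*r-6*s),
    sq_nonneg (8*r-4*u), sq_nonneg (6*s-4*u), sq_nonneg p, sq_nonneg q, sq_nonneg r,
    sq_nonneg s, sq_nonneg u]

lemma helper1 (n d : ℕ) (b : Fin n → Fin d → ℝ) (R : ℝ)
    (hrow : ∀ i, ∑ j, (b i j) ^ 2 ≤ R ^ 2)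
    (c : ℝ) (hc : 0 ≤ c) (v : Fin n → ℝ) (hv : ∀ k, 0 ≤ v k) :
    (∑ _i : Fin n, ∑ i' : Fin n, ∑ j : Fin d, ∑ _j' : Fin d, c * ((b i' j) ^ 2 * v i'))
      ≤ c * R ^ 2 * n * d * ∑ k, v k := by
  have h1 : ∀ i' : Fin n, (∑ j : Fin d, ∑ _j' : Fin d, c * ((b i' j) ^ 2 * v i'))
      ≤ c * R ^ 2 * d * v i' := by
    intro i'
    have e : (∑ j : Fin d, ∑ _j' : Fin d, c * ((b i' j) ^ 2 * v i'))
        = (c * d * v i') * ∑ j, (b i' j) ^ 2 := by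
      rw [Finset.mul_sum]
      refine Finset.sum_congr rfl fun j _ => ?_
      simp only [Finset.sum_const, Finset.card_univ, Fintype.card_fin, nsmul_eq_mul]
      ring
    rw [e]
    calc (c * d * v i') * ∑ j, (b i' j) ^ 2 ≤ (c * d * v i') * R ^ 2 := by
          apply mul_le_mul_of_nonneg_left (hrow i')
          have := hv i'
          positivity
      _ = c * R ^ 2 * d * v i' := by ring
  calc (∑ _i : Fin n, ∑ i' : Fin n, ∑ j : Fin d, ∑ _j' : Fin d, c * ((b i' j) ^ 2 * v i'))
      ≤ ∑ _i : Fin n, ∑ i' : Fin n, c * R ^ 2 * d * v i' := by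
        gcongr with i _ i' _
        exact h1 i'
    _ = c * R ^ 2 * n * d * ∑ k, v k := by
        simp only [Finset.sum_const, Finset.card_univ, Fintype.card_fin, nsmul_eq_mul,
          Finset.mul_sum]
        exact Finset.sum_congr rfl fun k _ => by ring

lemma helper2 (n d : ℕ) (b : Fin n → Fin d → ℝ) (R : ℝ)
    (hrow : ∀ i, ∑ j, (b i j) ^ 2 ≤ R ^ 2)
    (c : ℝ) (hc : 0 ≤ c) (v : Fin n → ℝ) (hv : ∀ k, 0 ≤ v k) :
    (∑ i : Fin n, ∑ _i' : Fin n, ∑ j : Fin d, ∑ _j' : Fin d, c * ((b i j) ^ 2 * v i))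
      ≤ c * R ^ 2 * n * d * ∑ k, v k := by
  have h1 : ∀ i : Fin n, (∑ _i' : Fin n, ∑ j : Fin d, ∑ _j' : Fin d, c * ((b i j) ^ 2 * v i))
      ≤ c * R ^ 2 * n * d * v i := by
    intro i
    have e : (∑ _i' : Fin n, ∑ j : Fin d, ∑ _j' : Fin d, c * ((b i j) ^ 2 * v i))
        = (c * n * d * v i) * ∑ j, (b i j) ^ 2 := by
      simp only [Finset.sum_const, Finset.card_univ, Fintype.card_fin, nsmul_eq_mul,
        Finset.mul_sum]
      refine Finset.sum_congr rfl fun j _ => ?_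
      ring
    rw [e]
    calc (c * n * d * v i) * ∑ j, (b i j) ^ 2 ≤ (c * n * d * v i) * R ^ 2 := by
          apply mul_le_mul_of_nonneg_left (hrow i)
          have := hv i
          positivity
      _ = c * R ^ 2 * n * d * v i := by ring
  calc (∑ i : Fin n, ∑ _i' : Fin n, ∑ j : Fin d, ∑ _j' : Fin d, c * ((b i j) ^ 2 * v i))
      ≤ ∑ i : Fin n, c * R ^ 2 * n * d * v i := Finset.sum_le_sum fun i _ => h1 i
    _ = c * R ^ 2 * n * d * ∑ k, v k := by rw [Finset.mul_sum]

lemma helper3 (n d : ℕ) (b : Fin n → Fin d → ℝ) (R : ℝ)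
    (hrow : ∀ i, ∑ j, (b i j) ^ 2 ≤ R ^ 2)
    (c : ℝ) (hc : 0 ≤ c) (S : Fin n → Fin d → ℝ) (hS : ∀ i j', 0 ≤ S i j') :
    (∑ i : Fin n, ∑ _i' : Fin n, ∑ j : Fin d, ∑ j' : Fin d, c * ((b i j) ^ 2 * S i j'))
      ≤ c * R ^ 2 * n * (∑ i : Fin n, ∑ j' : Fin d, S i j') := by
  have h1 : ∀ i : Fin n, (∑ _i' : Fin n, ∑ j : Fin d, ∑ j' : Fin d, c * ((b i j) ^ 2 * S i j'))
      ≤ c * R ^ 2 * n * ∑ j' : Fin d, S i j' := by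
    intro i
    have e : (∑ _i' : Fin n, ∑ j : Fin d, ∑ j' : Fin d, c * ((b i j) ^ 2 * S i j'))
        = (c * n) * ((∑ j, (b i j) ^ 2) * ∑ j' : Fin d, S i j') := by
      simp only [Finset.sum_const, Finset.card_univ, Fintype.card_fin, nsmul_eq_mul]
      rw [Finset.sum_mul_sum, Finset.mul_sum, Finset.mul_sum]
      refine Finset.sum_congr rfl fun j _ => ?_
      rw [Finset.mul_sum, Finset.mul_sum]
      exact Finset.sum_congr rfl fun j' _ => by ring
    rw [e]
    have hS' : 0 ≤ ∑ j' : Fin d, S i j' := Finset.sum_nonneg fun j' _ => hS i j'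
    calc (c * n) * ((∑ j, (b i j) ^ 2) * ∑ j' : Fin d, S i j')
        ≤ (c * n) * (R ^ 2 * ∑ j' : Fin d, S i j') := by
          apply mul_le_mul_of_nonneg_left _ (by positivity)
          exact mul_le_mul_of_nonneg_right (hrow i) hS'
      _ = c * R ^ 2 * n * ∑ j' : Fin d, S i j' := by ring
  calc (∑ i : Fin n, ∑ _i' : Fin n, ∑ j : Fin d, ∑ j' : Fin d, c * ((b i j) ^ 2 * S i j'))
      ≤ ∑ i : Fin n, c * R ^ 2 * n * ∑ j' : Fin d, S i j' := Finset.sum_le_sum fun i _ => h1 i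
    _ = c * R ^ 2 * n * (∑ i : Fin n, ∑ j' : Fin d, S i j') := by rw [Finset.mul_sum]

lemma aux_bound (n d : ℕ) (b : Fin n → Fin d → ℝ) (R : ℝ)
    (hrow : ∀ i, ∑ j, (b i j) ^ 2 ≤ R ^ 2)
    (yt ytil y : Fin n → ℝ) (yb : Fin n → Fin d → Fin n → ℝ) :
    (∑ i : Fin n, ∑ i' : Fin n, ∑ j : Fin d, ∑ j' : Fin d,
        (b i' j * (yt i' - ytil i') - b i j * (yb i j' i - ytil i)) ^ 2)
      ≤ 8 * R ^ 2 * n * d * (∑ k, (y k - ytil k) ^ 2)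
        + 12 * R ^ 2 * n * d * (∑ k, (yt k - y k) ^ 2)
        + 8 * R ^ 2 * n * (∑ i : Fin n, ∑ j' : Fin d, ∑ k, (yt k - yb i j' k) ^ 2) := by
  have hpt : ∀ (i i' : Fin n) (j j' : Fin d),
      (b i' j * (yt i' - ytil i') - b i j * (yb i j' i - ytil i)) ^ 2
        ≤ 6*((b i' j)^2*(yt i' - y i')^2) + 4*((b i' j)^2*(y i' - ytil i')^2)
          + 8*((b i j)^2*(∑ k, (yt k - yb i j' k)^2))
          + 6*((b i j)^2*(yt i - y i)^2) + 4*((b i j)^2*(y i - ytil i)^2) := by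
    intro i i' j j'
    have h8 : (yt i - yb i j' i) ^ 2 ≤ ∑ k, (yt k - yb i j' k) ^ 2 :=
      Finset.single_le_sum (f := fun k => (yt k - yb i j' k) ^ 2)
        (fun k _ => sq_nonneg _) (Finset.mem_univ i)
    have h8' : (b i j)^2 * (yt i - yb i j' i) ^ 2 ≤ (b i j)^2 * ∑ k, (yt k - yb i j' k) ^ 2 :=
      mul_le_mul_of_nonneg_left h8 (sq_nonneg _)
    have hk := key5 (b i' j * (yt i' - y i')) (b i' j * (y i' - ytil i'))
      (-(b i j * (yb i j' i - yt i))) (-(b i j * (yt i - y i))) (-(b i j * (y i - ytil i)))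
    nlinarith [hk, h8']
  have step1 : (∑ i : Fin n, ∑ i' : Fin n, ∑ j : Fin d, ∑ j' : Fin d,
        (b i' j * (yt i' - ytil i') - b i j * (yb i j' i - ytil i)) ^ 2)
      ≤ ∑ i : Fin n, ∑ i' : Fin n, ∑ j : Fin d, ∑ j' : Fin d,
        (6*((b i' j)^2*(yt i' - y i')^2) + 4*((b i' j)^2*(y i' - ytil i')^2)
          + 8*((b i j)^2*(∑ k, (yt k - yb i j' k)^2))
          + 6*((b i j)^2*(yt i - y i)^2) + 4*((b i j)^2*(y i - ytil i)^2)) := by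
    gcongr with i _ i' _ j _ j' _
    exact hpt i i' j j'
  refine le_trans step1 ?_
  have B1 := helper1 n d b R hrow 6 (by norm_num) (fun k => (yt k - y k)^2) (fun k => sq_nonneg _)
  have B2 := helper1 n d b R hrow 4 (by norm_num) (fun k => (y k - ytil k)^2) (fun k => sq_nonneg _)
  have B3 := helper3 n d b R hrow 8 (by norm_num) (fun i j' => ∑ k, (yt k - yb i j' k)^2)
    (fun i j' => Finset.sum_nonneg fun k _ => sq_nonneg _)
  have B4 := helper2 n d b R hrow 6 (by norm_num) (fun k => (yt k - y k)^2) (fun k => sq_nonneg _)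
  have B5 := helper2 n d b R hrow 4 (by norm_num) (fun k => (y k - ytil k)^2) (fun k => sq_nonneg _)
  simp only [Finset.sum_add_distrib]
  linarith [B1, B2, B3, B4, B5]

lemma sum4_swap {n d : ℕ} (f : Fin n → Fin n → Fin d → Fin d → ℝ) :
    (∑ i : Fin n, ∑ i' : Fin n, ∑ j : Fin d, ∑ j' : Fin d, f i i' j j')
      = ∑ j : Fin d, ∑ j' : Fin d, ∑ i : Fin n, ∑ i' : Fin n, f i i' j j' := by
  calc (∑ i : Fin n, ∑ i' : Fin n, ∑ j : Fin d, ∑ j' : Fin d, f i i' j j')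
      = ∑ i : Fin n, ∑ j : Fin d, ∑ i' : Fin n, ∑ j' : Fin d, f i i' j j' :=
        Finset.sum_congr rfl fun i _ => Finset.sum_comm
    _ = ∑ j : Fin d, ∑ i : Fin n, ∑ i' : Fin n, ∑ j' : Fin d, f i i' j j' := Finset.sum_comm
    _ = ∑ j : Fin d, ∑ i : Fin n, ∑ j' : Fin d, ∑ i' : Fin n, f i i' j j' :=
        Finset.sum_congr rfl fun j _ => Finset.sum_congr rfl fun i _ => Finset.sum_comm
    _ = ∑ j : Fin d, ∑ j' : Fin d, ∑ i : Fin n, ∑ i' : Fin n, f i i' j j' :=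
        Finset.sum_congr rfl fun j _ => Finset.sum_comm

/-- Lemma 4 (gradient variance bounds for SPD1-VR).  One inner iteration at outer
stage `k`, conditioned on the past: the current iterates `x^t, y^t` and snapshots
`x̃, ỹ` are fixed, the sampled indices `(i, i', j, j')` are uniform, and
`x̄ = xbar i' j`, `ȳ = ybar i j'` are the intermediate proximal iterates.
Conditional expectation is the average over the sampled indices. -/
theorem stmt_7 (n d : ℕ) (hn : 0 < n) (hd : 0 < d)
    (a : Fin n → Fin d → ℝ) (R R' : ℝ)
    (hR : IsGreatest (Set.range fun i => Real.sqrt (∑ j, (a i j) ^ 2)) R)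
    (hR' : IsGreatest (Set.range fun j => Real.sqrt (∑ i, (a i j) ^ 2)) R')
    (Xs : Fin d → Set ℝ) (hXconv : ∀ j, Convex ℝ (Xs j)) (hXcl : ∀ j, IsClosed (Xs j))
    (g : Fin d → ℝ → ℝ) (hgconv : ∀ j, ConvexOn ℝ (Xs j) (g j))
    (hglsc : ∀ j, LowerSemicontinuousOn (g j) (Xs j))
    (φ : Fin n → ℝ → ℝ) (hφconv : ∀ i, ConvexOn ℝ Set.univ (φ i))
    (XX : Set (Fin d → ℝ)) (hXX : XX = {x | ∀ j, x j ∈ Xs j})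
    (YY : Set (Fin n → ℝ)) (hYY : YY = {y | ∀ i, y i ∈ Ydom (φ i)})
    (η τ : ℝ) (hη : 0 < η) (hτ : 0 < τ)
    -- current iterates and snapshots
    (xt : Fin d → ℝ) (hxt : xt ∈ XX) (yt : Fin n → ℝ) (hyt : yt ∈ YY)
    (xtil : Fin d → ℝ) (hxtil : xtil ∈ XX) (ytil : Fin n → ℝ) (hytil : ytil ∈ YY)
    -- full gradients at the snapshot
    (Gx : Fin d → ℝ) (hGx : ∀ j, Gx j = (∑ i, a i j * ytil i) / (n : ℝ))
    (Gy : Fin n → ℝ) (hGy : ∀ i, Gy i = (∑ j, a i j * xtil j) / (d : ℝ))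
    -- intermediate iterates: `xbar i' j` is `x̄^t` when the sampled pair is `(i', j)`
    (xbar : Fin n → Fin d → Fin d → ℝ) (ybar : Fin n → Fin d → Fin n → ℝ)
    (hxbar : ∀ (i' : Fin n) (j : Fin d),
      (∀ k, k ≠ j → xbar i' j k = xt k) ∧ xbar i' j j ∈ Xs j ∧
      ∀ z ∈ Xs j,
        η * g j (xbar i' j j) +
            (xbar i' j j -
              (xt j - η * (a i' j * (yt i' - ytil i') + Gx j))) ^ 2 / 2 ≤
          η * g j z +
            (z - (xt j - η * (a i' j * (yt i' - ytil i') + Gx j))) ^ 2 / 2)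
    (hybar : ∀ (i : Fin n) (j' : Fin d),
      (∀ k, k ≠ i → ybar i j' k = yt k) ∧ ybar i j' i ∈ Ydom (φ i) ∧
      ∀ z ∈ Ydom (φ i),
        (τ / (d : ℝ)) * phiStar (φ i) (ybar i j' i) +
            (ybar i j' i -
              (yt i + τ * (a i j' * (xt j' - xtil j') + Gy i))) ^ 2 / 2 ≤
          (τ / (d : ℝ)) * phiStar (φ i) z +
            (z - (yt i + τ * (a i j' * (xt j' - xtil j') + Gy i))) ^ 2 / 2) :
    (∀ y ∈ YY,
      (∑ i : Fin n, ∑ i' : Fin n, ∑ j : Fin d, ∑ j' : Fin d,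
          ((a i' j * (yt i' - ytil i') + Gx j)
            - (a i j * (ybar i j' i - ytil i) + Gx j)) ^ 2) /
          ((n : ℝ) ^ 2 * (d : ℝ) ^ 2)
        ≤ 8 * R ^ 2 / ((n : ℝ) * (d : ℝ)) * (∑ k, (y k - ytil k) ^ 2)
          + 12 * R ^ 2 / ((n : ℝ) * (d : ℝ)) * (∑ k, (yt k - y k) ^ 2)
          + 8 * R ^ 2 / (d : ℝ) *
            ((∑ i : Fin n, ∑ j' : Fin d, ∑ k, (yt k - ybar i j' k) ^ 2) /
              ((n : ℝ) * (d : ℝ)))) ∧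
    (∀ x ∈ XX,
      (∑ i : Fin n, ∑ i' : Fin n, ∑ j : Fin d, ∑ j' : Fin d,
          ((a i j' * (xt j' - xtil j') + Gy i)
            - (a i j * (xbar i' j j - xtil j) + Gy i)) ^ 2) /
          ((n : ℝ) ^ 2 * (d : ℝ) ^ 2)
        ≤ 8 * R' ^ 2 / ((n : ℝ) * (d : ℝ)) * (∑ k, (x k - xtil k) ^ 2)
          + 12 * R' ^ 2 / ((n : ℝ) * (d : ℝ)) * (∑ k, (xt k - x k) ^ 2)
          + 8 * R' ^ 2 / (n : ℝ) *
            ((∑ i' : Fin n, ∑ j : Fin d, ∑ k, (xt k - xbar i' j k) ^ 2) /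
              ((n : ℝ) * (d : ℝ)))) := by

  have hn0 : ((n : ℝ)) ≠ 0 := Nat.cast_ne_zero.mpr hn.ne'
  have hd0 : ((d : ℝ)) ≠ 0 := Nat.cast_ne_zero.mpr hd.ne'
  have hpos : (0 : ℝ) < (n : ℝ) ^ 2 * (d : ℝ) ^ 2 := by positivity
  have hrow : ∀ i, ∑ j, (a i j) ^ 2 ≤ R ^ 2 := by
    intro i
    have h1 : Real.sqrt (∑ j, (a i j) ^ 2) ≤ R := hR.2 ⟨i, rfl⟩
    have h2 : (0 : ℝ) ≤ ∑ j, (a i j) ^ 2 := Finset.sum_nonneg fun j _ => sq_nonneg _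
    nlinarith [Real.sq_sqrt h2, Real.sqrt_nonneg (∑ j, (a i j) ^ 2)]
  have hcol : ∀ j, ∑ i, (a i j) ^ 2 ≤ R' ^ 2 := by
    intro j
    have h1 : Real.sqrt (∑ i, (a i j) ^ 2) ≤ R' := hR'.2 ⟨j, rfl⟩
    have h2 : (0 : ℝ) ≤ ∑ i, (a i j) ^ 2 := Finset.sum_nonneg fun i _ => sq_nonneg _
    nlinarith [Real.sq_sqrt h2, Real.sqrt_nonneg (∑ i, (a i j) ^ 2)]
  constructor
  · intro y hy
    simp only [add_sub_add_right_eq_sub]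
    rw [div_le_iff₀ hpos]
    have hkey := aux_bound n d a R hrow yt ytil y ybar
    refine le_trans hkey (le_of_eq ?_)
    field_simp
  · intro x hx
    simp only [add_sub_add_right_eq_sub]
    rw [div_le_iff₀ hpos]
    have hkey := aux_bound d n (fun j i => a i j) R' hcol xt xtil x (fun j i' => xbar i' j)
    rw [sum4_swap]
    refine le_trans hkey (le_of_eq ?_)
    have hsw : (∑ i : Fin d, ∑ j' : Fin n, ∑ k, (xt k - xbar j' i k) ^ 2)
        = ∑ i' : Fin n, ∑ j : Fin d, ∑ k, (xt k - xbar i' j k) ^ 2 := Finset.sum_comm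
    simp only [hsw]
    field_simp
end

section
/- (Lemma 5, one-step inequality for SPD1-VR) Assume g is μ-strongly convex (μ > 0), each φ_i* is γ-strongly convex (γ > 0), and the step sizes satisfy ημ ≤ 1 and τγ/d ≤ 1. In the t-th inner iteration of SPD1-VR at outer stage k, define x'^t ∈ X by x'^t_j = prox_{η g_j}(x^t_j − η(a_{i'_t j}(y^t_{i'_t} − ỹ^k_{i'_t}) + G^k_{x,j})) for every j ∈ [d], and y'^t ∈ Y by y'^t_i = prox_{(τ/d)φ_i*}(y^t_i + τ(a_{i j'_t}(x^t_{j'_t} − x̃^k_{j'_t}) + G^k_{y,i})) for every i ∈ [n]. Then, conditioned on the σ-algebra F_t of indices sampled before iteration t, for any x ∈ X and y ∈ Y: (1/(2η))·E[(1 − ημ/(4d) + 12R'²ητ/(nd))‖x^t − x‖² − ‖x^{t+1} − x‖² − (1/2 − 8ητR'²/n)‖x^t − x̄^t‖² | F_t] + (1/(2τ))·E[(1 − τγ/(4nd) + 12R²ητ/(nd))‖y^t − y‖² − ‖y^{t+1} − y‖² − (1/2 − 8ητR²/d)‖y^t − ȳ^t‖² | F_t] ≥ (1/d)·E[F(x'^t,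 y) − F(x, y'^t) | F_t] − (4ηR²/(nd))‖ỹ^k − y‖² − (4τR'²/(nd))‖x̃^k − x‖². -/
lemma Ydom_convex (φ : ℝ → ℝ) : Convex ℝ (Ydom φ) := by
  intro y1 h1 y2 h2 b1 b2 hb1 hb2 hb
  obtain ⟨M1, hM1⟩ := h1
  obtain ⟨M2, hM2⟩ := h2
  refine ⟨b1*M1 + b2*M2, ?_⟩
  rintro _ ⟨u, rfl⟩
  have e1 : y1 * u - φ u ≤ M1 := hM1 ⟨u, rfl⟩
  have e2 : y2 * u - φ u ≤ M2 := hM2 ⟨u, rfl⟩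
  have e3 : (b1 • y1 + b2 • y2) * u - φ u = b1*(y1*u - φ u) + b2*(y2*u - φ u) := by
    simp only [smul_eq_mul]; linear_combination φ u * hb
  show (b1 • y1 + b2 • y2) * u - φ u ≤ b1*M1 + b2*M2
  rw [e3]
  have := add_le_add (mul_le_mul_of_nonneg_left e1 hb1) (mul_le_mul_of_nonneg_left e2 hb2)
  linarith

lemma prox_growth {s : Set ℝ} (hs : Convex ℝ s) (ψ : ℝ → ℝ) (κ : ℝ) (hκ : 0 ≤ κ)
    (hsc : ConvexOn ℝ s (fun z => ψ z - κ/2 * z^2)) (c : ℝ) {u z : ℝ} (hu : u ∈ s) (hz : z ∈ s)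
    (hmin : ∀ w ∈ s, ψ u + (u - c)^2/2 ≤ ψ w + (w - c)^2/2) :
    ψ u + (u - c)^2/2 + (1+κ)/2 * (z - u)^2 ≤ ψ z + (z - c)^2/2 := by
  have key : ∀ lam : ℝ, 0 < lam → lam < 1 →
      (1+κ)/2 * (1-lam) * (z-u)^2 ≤ (ψ z + (z - c)^2/2) - (ψ u + (u - c)^2/2) := by
    intro lam h0 h1
    have hm : (1-lam) • u + lam • z ∈ s := hs hu hz (by linarith) h0.le (by ring)
    have h2 := hmin _ hm
    have h3 := hsc.2 hu hz (by linarith : (0:ℝ) ≤ 1 - lam) h0.le (by ring)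
    simp only [smul_eq_mul] at h2 h3
    have hq : ((1-lam)*u + lam*z - c)^2/2 + κ/2*((1-lam)*u + lam*z)^2
        = (1-lam)*((u-c)^2/2 + κ/2*u^2) + lam*((z-c)^2/2 + κ/2*z^2)
          - (1+κ)/2*lam*(1-lam)*(z-u)^2 := by ring
    have h4 : lam * ((1+κ)/2 * (1-lam) * (z-u)^2)
        ≤ lam * ((ψ z + (z - c)^2/2) - (ψ u + (u - c)^2/2)) := by nlinarith [h2, h3, hq]
    exact le_of_mul_le_mul_left h4 h0
  have hK : 0 ≤ (1+κ)/2 * (z-u)^2 := by positivity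
  have main : (1+κ)/2 * (z-u)^2 ≤ (ψ z + (z - c)^2/2) - (ψ u + (u - c)^2/2) := by
    refine le_of_forall_pos_le_add fun ε hε => ?_
    rcases eq_or_lt_of_le hK with h|h
    · linarith [key (1/2) (by norm_num) (by norm_num)]
    · set K := (1+κ)/2 * (z-u)^2 with hKdef
      set lam := min (1/2) (ε / K) with hlam
      have hl0 : 0 < lam := lt_min (by norm_num) (div_pos hε h)
      have hl1 : lam < 1 := lt_of_le_of_lt (min_le_left _ _) (by norm_num)
      have h5 := key lam hl0 hl1
      have h6 : K * lam ≤ ε := by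
        have h7 : lam ≤ ε / K := min_le_right _ _
        calc K * lam ≤ K * (ε / K) := by exact mul_le_mul_of_nonneg_left h7 hK
          _ = ε := by field_simp
      nlinarith [h5, h6]
  linarith [main]

lemma masterX_core (η μ : ℝ) (hη : 0 < η) (hμ : 0 < μ) (hημ : η * μ ≤ 1)
    {s : Set ℝ} (hs : Convex ℝ s) (gj : ℝ → ℝ)
    (hsc : ConvexOn ℝ s (fun z => gj z - μ/2*z^2))
    (xtj xj pp uu vh vv : ℝ) (hxm : xj ∈ s) (hpm : pp ∈ s) (hum : uu ∈ s)
    (hpmin : ∀ w ∈ s, η * gj pp + (pp - (xtj - η*vv))^2/2 ≤ η * gj w + (w - (xtj - η*vv))^2/2)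
    (humin : ∀ w ∈ s, η * gj uu + (uu - (xtj - η*vh))^2/2 ≤ η * gj w + (w - (xtj - η*vh))^2/2) :
    gj pp - gj xj + vh*(pp - xj)
      ≤ (1/(2*η))*((1 - η*μ/4)*(xtj - xj)^2 - (uu - xj)^2 - (1/2)*(xtj - pp)^2)
        + η*(vh - vv)^2 := by
  have h2η : (0:ℝ) < 2*η := by linarith
  have hκ : (0:ℝ) ≤ η*μ := by positivity
  have hsc' : ConvexOn ℝ s (fun z => η * gj z - (η*μ)/2 * z^2) := by
    refine ⟨hs, fun z1 h1 z2 h2 b1 b2 hb1 hb2 hb => ?_⟩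
    have h := hsc.2 h1 h2 hb1 hb2 hb
    simp only [smul_eq_mul] at h ⊢
    have h' := mul_le_mul_of_nonneg_left h hη.le
    nlinarith [h']
  have H1 : η * gj uu + (uu - (xtj - η*vh))^2/2 + (1+η*μ)/2*(xj - uu)^2
      ≤ η * gj xj + (xj - (xtj - η*vh))^2/2 :=
    prox_growth hs (fun z => η * gj z) (η*μ) hκ hsc' (xtj - η*vh) hum hxm humin
  have H2 : η * gj pp + (pp - (xtj - η*vv))^2/2 + (1+η*μ)/2*(uu - pp)^2
      ≤ η * gj uu + (uu - (xtj - η*vv))^2/2 :=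
    prox_growth hs (fun z => η * gj z) (η*μ) hκ hsc' (xtj - η*vv) hpm hum hpmin
  have G2 : η * gj uu + (uu - (xtj - η*vh))^2/2 + (1+η*μ)/2*(pp - uu)^2
      ≤ η * gj pp + (pp - (xtj - η*vh))^2/2 :=
    prox_growth hs (fun z => η * gj z) (η*μ) hκ hsc' (xtj - η*vh) hum hpm humin
  have e3 : (uu-(xtj-η*vv))^2/2 - (pp-(xtj-η*vv))^2/2 + (pp-(xtj-η*vh))^2/2
      - (uu-(xtj-η*vh))^2/2 = (pp-uu)*(η*(vh-vv)) := by ring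
  have C1 : (pp - uu)^2 ≤ (pp - uu) * (η*(vh - vv)) := by
    linarith [H2, G2, e3, mul_nonneg hκ (sq_nonneg (pp-uu))]
  have h4 : η*((vh - vv)*(pp - uu)) ≤ η*(η*(vh - vv)^2) := by
    linarith [C1, sq_nonneg (η*(vh - vv) - (pp - uu))]
  have e1 : (xj - (xtj - η*vh))^2/2 - (uu - (xtj - η*vh))^2/2
      = (xj - xtj)^2/2 - (uu - xtj)^2/2 + η*vh*(xj - uu) := by ring
  have e2 : (uu - (xtj - η*vv))^2/2 - (pp - (xtj - η*vv))^2/2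
      = (uu - xtj)^2/2 - (pp - xtj)^2/2 + η*vv*(uu - pp) := by ring
  have habs : (η*μ/4)*(xtj - xj)^2
      ≤ η*μ*(xj - uu)^2 + η*μ*(uu - pp)^2 + (1/2)*(xtj - pp)^2 := by
    linarith [mul_nonneg hκ (sq_nonneg ((xtj - pp) - (pp - uu) - (uu - xj))),
      mul_nonneg hκ (sq_nonneg ((pp - uu) - (uu - xj))),
      mul_nonneg (by linarith : (0:ℝ) ≤ 1 - η*μ) (sq_nonneg (xtj - pp))]
  have key : 2*η*(gj pp - gj xj + vh*(pp - xj) - η*(vh - vv)^2)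
      ≤ (1 - η*μ/4)*(xtj - xj)^2 - (uu - xj)^2 - (1/2)*(xtj - pp)^2 := by
    linarith [H1, H2, h4, habs, sq_nonneg (uu - pp), e1, e2]
  have final : gj pp - gj xj + vh*(pp - xj) - η*(vh - vv)^2
      ≤ ((1 - η*μ/4)*(xtj - xj)^2 - (uu - xj)^2 - (1/2)*(xtj - pp)^2)/(2*η) := by
    rw [le_div_iff₀ h2η]; linarith [key]
  have e : (1/(2*η))*((1 - η*μ/4)*(xtj - xj)^2 - (uu - xj)^2 - (1/2)*(xtj - pp)^2)
      = ((1 - η*μ/4)*(xtj - xj)^2 - (uu - xj)^2 - (1/2)*(xtj - pp)^2)/(2*η) := by ring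
  linarith [final, e.le, e.ge]

section sumhelpers
variable {n d : ℕ}
open Finset

lemma sum4_j (n : ℕ) (f : Fin d → ℝ) :
    (∑ _i : Fin n, ∑ _i' : Fin n, ∑ j : Fin d, ∑ _j' : Fin d, f j)
      = (n:ℝ)^2*(d:ℝ)*∑ j, f j := by
  simp [Finset.sum_const, Finset.card_univ, Fintype.card_fin, nsmul_eq_mul, ← Finset.mul_sum]
  ring

lemma sum4_i (d : ℕ) (f : Fin n → ℝ) :
    (∑ i : Fin n, ∑ _i' : Fin n, ∑ _j : Fin d, ∑ _j' : Fin d, f i)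
      = (n:ℝ)*(d:ℝ)^2*∑ i, f i := by
  simp [Finset.sum_const, Finset.card_univ, Fintype.card_fin, nsmul_eq_mul, ← Finset.mul_sum]
  ring

lemma sum4_i' (d : ℕ) (f : Fin n → ℝ) :
    (∑ _i : Fin n, ∑ i' : Fin n, ∑ _j : Fin d, ∑ _j' : Fin d, f i')
      = (n:ℝ)*(d:ℝ)^2*∑ i', f i' := by
  simp [Finset.sum_const, Finset.card_univ, Fintype.card_fin, nsmul_eq_mul, ← Finset.mul_sum]
  ring

lemma sum4_j' (n : ℕ) (f : Fin d → ℝ) :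
    (∑ _i : Fin n, ∑ _i' : Fin n, ∑ _j : Fin d, ∑ j' : Fin d, f j')
      = (n:ℝ)^2*(d:ℝ)*∑ j', f j' := by
  simp [Finset.sum_const, Finset.card_univ, Fintype.card_fin, nsmul_eq_mul, ← Finset.mul_sum]
  ring

lemma sum4_i'j (f : Fin n → Fin d → ℝ) :
    (∑ _i : Fin n, ∑ i' : Fin n, ∑ j : Fin d, ∑ _j' : Fin d, f i' j)
      = (n:ℝ)*(d:ℝ)*∑ i', ∑ j, f i' j := by
  simp [Finset.sum_const, Finset.card_univ, Fintype.card_fin, nsmul_eq_mul, ← Finset.mul_sum]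
  ring

lemma sum4_ij' (f : Fin n → Fin d → ℝ) :
    (∑ i : Fin n, ∑ _i' : Fin n, ∑ _j : Fin d, ∑ j' : Fin d, f i j')
      = (n:ℝ)*(d:ℝ)*∑ i, ∑ j', f i j' := by
  simp [Finset.sum_const, Finset.card_univ, Fintype.card_fin, nsmul_eq_mul, ← Finset.mul_sum]
  ring

lemma comm_i_last (f : Fin n → Fin n → Fin d → Fin d → ℝ) :
    ∑ i, ∑ i', ∑ j, ∑ j', f i i' j j' = ∑ i', ∑ j, ∑ j', ∑ i, f i i' j j' := by
  rw [Finset.sum_comm]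
  refine Finset.sum_congr rfl fun i' _ => ?_
  rw [Finset.sum_comm]
  refine Finset.sum_congr rfl fun j _ => ?_
  rw [Finset.sum_comm]

lemma comm_j_last (f : Fin n → Fin n → Fin d → Fin d → ℝ) :
    ∑ i, ∑ i', ∑ j, ∑ j', f i i' j j' = ∑ i, ∑ i', ∑ j', ∑ j, f i i' j j' := by
  refine Finset.sum_congr rfl fun i _ => Finset.sum_congr rfl fun i' _ => ?_
  rw [Finset.sum_comm]

lemma comm_j_first (f : Fin n → Fin n → Fin d → Fin d → ℝ) :
    ∑ i, ∑ i', ∑ j, ∑ j', f i i' j j' = ∑ j, ∑ i, ∑ i', ∑ j', f i i' j j' := by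
  exact Eq.trans (Finset.sum_congr rfl fun i _ => Finset.sum_comm) Finset.sum_comm

lemma comm3_rot {α β γ : Type*} [Fintype α] [Fintype β] [Fintype γ]
    (f : α → β → γ → ℝ) :
    ∑ u, ∑ v, ∑ w, f u v w = ∑ v, ∑ w, ∑ u, f u v w := by
  rw [Finset.sum_comm]
  refine Finset.sum_congr rfl fun v _ => ?_
  rw [Finset.sum_comm]

end sumhelpers


set_option maxHeartbeats 2000000 in
/-- Lemma 5 (one-step inequality for SPD1-VR).  One inner iteration at outer stage
`k`, conditioned on the past: `x^t, y^t` and snapshots `x̃, ỹ` are fixed,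
`(i, i', j, j')` is sampled uniformly; `x' i'` and `y' j'` are the full "imaginary"
proximal iterates, `x̄ = Function.update x^t j (x' i' j)`,
`ȳ = Function.update y^t i (y' j' i)`, and `xN i i' j j'`, `yN i i' j j'` are the
extragradient iterates `x^{t+1}, y^{t+1}`.  Conditional expectation is the average
over the `n²d²` index quadruples. -/
theorem stmt_8 (n d : ℕ) (hn : 0 < n) (hd : 0 < d)
    (a : Fin n → Fin d → ℝ) (R R' μ γ : ℝ) (hμ : 0 < μ) (hγ : 0 < γ)
    (hR : IsGreatest (Set.range fun i => Real.sqrt (∑ j, (a i j) ^ 2)) R)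
    (hR' : IsGreatest (Set.range fun j => Real.sqrt (∑ i, (a i j) ^ 2)) R')
    (Xs : Fin d → Set ℝ) (hXconv : ∀ j, Convex ℝ (Xs j)) (hXcl : ∀ j, IsClosed (Xs j))
    (g : Fin d → ℝ → ℝ) (hgconv : ∀ j, ConvexOn ℝ (Xs j) (g j))
    (hglsc : ∀ j, LowerSemicontinuousOn (g j) (Xs j))
    -- `g` is `μ`-strongly convex (coordinatewise, equivalently for separable `g`)
    (hgstrong : ∀ j, ConvexOn ℝ (Xs j) (fun z => g j z - μ / 2 * z ^ 2))
    (φ : Fin n → ℝ → ℝ) (hφconv : ∀ i, ConvexOn ℝ Set.univ (φ i))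
    -- each `φ_i*` is `γ`-strongly convex on its domain
    (hφstarstrong : ∀ i, ConvexOn ℝ (Ydom (φ i))
      (fun z => phiStar (φ i) z - γ / 2 * z ^ 2))
    (XX : Set (Fin d → ℝ)) (hXX : XX = {x | ∀ j, x j ∈ Xs j})
    (YY : Set (Fin n → ℝ)) (hYY : YY = {y | ∀ i, y i ∈ Ydom (φ i)})
    (F : (Fin d → ℝ) → (Fin n → ℝ) → ℝ)
    (hF : ∀ x y, F x y = (1 / (n : ℝ)) * (∑ i, y i * ∑ j, a i j * x j)
        - (1 / (n : ℝ)) * (∑ i, phiStar (φ i) (y i)) + ∑ j, g j (x j))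
    -- step sizes
    (η τ : ℝ) (hη : 0 < η) (hτ : 0 < τ)
    (hημ : η * μ ≤ 1) (hτγ : τ * γ / (d : ℝ) ≤ 1)
    -- current iterates and snapshots
    (xt : Fin d → ℝ) (hxt : xt ∈ XX) (yt : Fin n → ℝ) (hyt : yt ∈ YY)
    (xtil : Fin d → ℝ) (hxtil : xtil ∈ XX) (ytil : Fin n → ℝ) (hytil : ytil ∈ YY)
    -- full gradients at the snapshot
    (Gx : Fin d → ℝ) (hGx : ∀ j, Gx j = (∑ i, a i j * ytil i) / (n : ℝ))
    (Gy : Fin n → ℝ) (hGy : ∀ i, Gy i = (∑ j, a i j * xtil j) / (d : ℝ))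
    -- imaginary full proximal iterates `x'^t` (given `i'`) and `y'^t` (given `j'`)
    (x' : Fin n → Fin d → ℝ) (y' : Fin d → Fin n → ℝ)
    (hx' : ∀ (i' : Fin n) (j : Fin d), x' i' j ∈ Xs j ∧
      ∀ z ∈ Xs j,
        η * g j (x' i' j) +
            (x' i' j - (xt j - η * (a i' j * (yt i' - ytil i') + Gx j))) ^ 2 / 2 ≤
          η * g j z +
            (z - (xt j - η * (a i' j * (yt i' - ytil i') + Gx j))) ^ 2 / 2)
    (hy' : ∀ (j' : Fin d) (i : Fin n), y' j' i ∈ Ydom (φ i) ∧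
      ∀ z ∈ Ydom (φ i),
        (τ / (d : ℝ)) * phiStar (φ i) (y' j' i) +
            (y' j' i - (yt i + τ * (a i j' * (xt j' - xtil j') + Gy i))) ^ 2 / 2 ≤
          (τ / (d : ℝ)) * phiStar (φ i) z +
            (z - (yt i + τ * (a i j' * (xt j' - xtil j') + Gy i))) ^ 2 / 2)
    -- the extragradient iterates `x^{t+1}, y^{t+1}` for each sampled quadruple
    (xN : Fin n → Fin n → Fin d → Fin d → Fin d → ℝ)
    (yN : Fin n → Fin n → Fin d → Fin d → Fin n → ℝ)
    (hxN : ∀ (i i' : Fin n) (j j' : Fin d),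
      (∀ k, k ≠ j → xN i i' j j' k = xt k) ∧ xN i i' j j' j ∈ Xs j ∧
      ∀ z ∈ Xs j,
        η * g j (xN i i' j j' j) +
            (xN i i' j j' j -
              (xt j - η * (a i j * (y' j' i - ytil i) + Gx j))) ^ 2 / 2 ≤
          η * g j z +
            (z - (xt j - η * (a i j * (y' j' i - ytil i) + Gx j))) ^ 2 / 2)
    (hyN : ∀ (i i' : Fin n) (j j' : Fin d),
      (∀ k, k ≠ i → yN i i' j j' k = yt k) ∧ yN i i' j j' i ∈ Ydom (φ i) ∧
      ∀ z ∈ Ydom (φ i),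
        (τ / (d : ℝ)) * phiStar (φ i) (yN i i' j j' i) +
            (yN i i' j j' i -
              (yt i + τ * (a i j * (x' i' j - xtil j) + Gy i))) ^ 2 / 2 ≤
          (τ / (d : ℝ)) * phiStar (φ i) z +
            (z - (yt i + τ * (a i j * (x' i' j - xtil j) + Gy i))) ^ 2 / 2) :
    ∀ x ∈ XX, ∀ y ∈ YY,
      (1 / (d : ℝ)) *
          ((∑ i : Fin n, ∑ i' : Fin n, ∑ j : Fin d, ∑ j' : Fin d,
              (F (x' i') y - F x (y' j'))) / ((n : ℝ) ^ 2 * (d : ℝ) ^ 2))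
        - 4 * η * R ^ 2 / ((n : ℝ) * (d : ℝ)) * (∑ k, (ytil k - y k) ^ 2)
        - 4 * τ * R' ^ 2 / ((n : ℝ) * (d : ℝ)) * (∑ k, (xtil k - x k) ^ 2)
      ≤ (1 / (2 * η)) *
          ((∑ i : Fin n, ∑ i' : Fin n, ∑ j : Fin d, ∑ j' : Fin d,
              ((1 - η * μ / (4 * (d : ℝ)) + 12 * R' ^ 2 * η * τ / ((n : ℝ) * (d : ℝ)))
                  * (∑ k, (xt k - x k) ^ 2)
                - (∑ k, (xN i i' j j' k - x k) ^ 2)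
                - (1 / 2 - 8 * η * τ * R' ^ 2 / (n : ℝ))
                  * (∑ k, (xt k - Function.update xt j (x' i' j) k) ^ 2))) /
            ((n : ℝ) ^ 2 * (d : ℝ) ^ 2))
        + (1 / (2 * τ)) *
          ((∑ i : Fin n, ∑ i' : Fin n, ∑ j : Fin d, ∑ j' : Fin d,
              ((1 - τ * γ / (4 * (n : ℝ) * (d : ℝ)) + 12 * R ^ 2 * η * τ / ((n : ℝ) * (d : ℝ)))
                  * (∑ k, (yt k - y k) ^ 2)
                - (∑ k, (yN i i' j j' k - y k) ^ 2)
                - (1 / 2 - 8 * η * τ * R ^ 2 / (d : ℝ))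
                  * (∑ k, (yt k - Function.update yt i (y' j' i) k) ^ 2))) /
            ((n : ℝ) ^ 2 * (d : ℝ) ^ 2)) := by
  intro x hx y hy
  have hn0 : (0:ℝ) < n := by exact_mod_cast hn
  have hd0 : (0:ℝ) < d := by exact_mod_cast hd
  have hn0' : (n:ℝ) ≠ 0 := ne_of_gt hn0
  have hd0' : (d:ℝ) ≠ 0 := ne_of_gt hd0
  have hN : (0:ℝ) < (n:ℝ)^2*(d:ℝ)^2 := by positivity
  have hR0 : 0 ≤ R := by obtain ⟨i0, hi0⟩ := hR.1; rw [← hi0]; positivity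
  have hR'0 : 0 ≤ R' := by obtain ⟨j0, hj0⟩ := hR'.1; rw [← hj0]; positivity
  have rowsq : ∀ i0 : Fin n, (∑ j0, (a i0 j0)^2) ≤ R^2 := by
    intro i0
    have h1 : Real.sqrt (∑ j0, (a i0 j0)^2) ≤ R := hR.2 ⟨i0, rfl⟩
    have h2 : (0:ℝ) ≤ ∑ j0, (a i0 j0)^2 := by positivity
    have h3 : Real.sqrt (∑ j0, (a i0 j0)^2) * Real.sqrt (∑ j0, (a i0 j0)^2) ≤ R * R :=
      mul_le_mul h1 h1 (Real.sqrt_nonneg _) (le_trans (Real.sqrt_nonneg _) h1)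
    have h4 := Real.sq_sqrt h2
    linarith only [h3, h4, pow_two (Real.sqrt (∑ j0, (a i0 j0)^2)), pow_two R]
  have colsq : ∀ j0 : Fin d, (∑ i0, (a i0 j0)^2) ≤ R'^2 := by
    intro j0
    have h1 : Real.sqrt (∑ i0, (a i0 j0)^2) ≤ R' := hR'.2 ⟨j0, rfl⟩
    have h2 : (0:ℝ) ≤ ∑ i0, (a i0 j0)^2 := by positivity
    have h3 : Real.sqrt (∑ i0, (a i0 j0)^2) * Real.sqrt (∑ i0, (a i0 j0)^2) ≤ R' * R' :=
      mul_le_mul h1 h1 (Real.sqrt_nonneg _) (le_trans (Real.sqrt_nonneg _) h1)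
    have h4 := Real.sq_sqrt h2
    linarith only [h3, h4, pow_two (Real.sqrt (∑ i0, (a i0 j0)^2)), pow_two R']
  have hxj : ∀ j, x j ∈ Xs j := by rw [hXX] at hx; exact hx
  have hyi : ∀ i, y i ∈ Ydom (φ i) := by rw [hYY] at hy; exact hy
  -- per-index master inequalities
  have mX : ∀ (i i' : Fin n) (j j' : Fin d),
      g j (x' i' j) - g j (x j) + (a i j * (y' j' i - ytil i) + Gx j) * (x' i' j - x j)
      ≤ (1/(2*η))*((1 - η*μ/4)*(xt j - x j)^2) - (1/(2*η))*(xN i i' j j' j - x j)^2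
        - (1/(2*η))*((1/2)*(xt j - x' i' j)^2)
        + η*(a i j * (y' j' i - ytil i) - a i' j * (yt i' - ytil i'))^2 := by
    intro i i' j j'
    obtain ⟨hxNeq, hxNm, hxNmin⟩ := hxN i i' j j'
    obtain ⟨hx'm, hx'min⟩ := hx' i' j
    have h := masterX_core η μ hη hμ hημ (hXconv j) (g j) (hgstrong j) (xt j) (x j)
      (x' i' j) (xN i i' j j' j)
      (a i j * (y' j' i - ytil i) + Gx j) (a i' j * (yt i' - ytil i') + Gx j)
      (hxj j) hx'm hxNm hx'min hxNmin
    exact le_trans h (le_of_eq (by ring))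
  have mY : ∀ (i i' : Fin n) (j j' : Fin d),
      (1/(d:ℝ)) * (phiStar (φ i) (y' j' i) - phiStar (φ i) (y i))
        - (a i j * (x' i' j - xtil j) + Gy i) * (y' j' i - y i)
      ≤ (1/(2*τ))*((1 - τ*γ/(4*(d:ℝ)))*(yt i - y i)^2) - (1/(2*τ))*(yN i i' j j' i - y i)^2
        - (1/(2*τ))*((1/2)*(yt i - y' j' i)^2)
        + τ*(a i j' * (xt j' - xtil j') - a i j * (x' i' j - xtil j))^2 := by
    intro i i' j j'
    obtain ⟨hyNeq, hyNm, hyNmin⟩ := hyN i i' j j'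
    obtain ⟨hy'm, hy'min⟩ := hy' j' i
    have hYconv : Convex ℝ (Ydom (φ i)) := Ydom_convex _
    have hscY : ConvexOn ℝ (Ydom (φ i)) (fun z => (1/(d:ℝ)) * phiStar (φ i) z - (γ/(d:ℝ))/2 * z^2) := by
      refine ⟨hYconv, fun z1 h1 z2 h2 b1 b2 hb1 hb2 hb => ?_⟩
      have h := (hφstarstrong i).2 h1 h2 hb1 hb2 hb
      simp only [smul_eq_mul] at h ⊢
      have h' := mul_le_mul_of_nonneg_left h (by positivity : (0:ℝ) ≤ 1/(d:ℝ))
      ring_nf at h' ⊢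
      linarith only [h']
    have hμY : (0:ℝ) < γ/(d:ℝ) := by positivity
    have hτγ' : τ * (γ/(d:ℝ)) ≤ 1 := by rw [← mul_div_assoc]; exact hτγ
    have hpminY : ∀ w ∈ Ydom (φ i),
        τ * ((1/(d:ℝ)) * phiStar (φ i) (y' j' i))
          + (y' j' i - (yt i - τ * (-(a i j' * (xt j' - xtil j') + Gy i))))^2/2
        ≤ τ * ((1/(d:ℝ)) * phiStar (φ i) w)
          + (w - (yt i - τ * (-(a i j' * (xt j' - xtil j') + Gy i))))^2/2 := by
      intro w hw
      have h := hy'min w hw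
      have e1 : yt i - τ * (-(a i j' * (xt j' - xtil j') + Gy i))
          = yt i + τ * (a i j' * (xt j' - xtil j') + Gy i) := by ring
      have e2 : τ * ((1/(d:ℝ)) * phiStar (φ i) (y' j' i)) = (τ/(d:ℝ)) * phiStar (φ i) (y' j' i) := by ring
      have e3 : τ * ((1/(d:ℝ)) * phiStar (φ i) w) = (τ/(d:ℝ)) * phiStar (φ i) w := by ring
      rw [e1, e2, e3]; exact h
    have huminY : ∀ w ∈ Ydom (φ i),
        τ * ((1/(d:ℝ)) * phiStar (φ i) (yN i i' j j' i))
          + (yN i i' j j' i - (yt i - τ * (-(a i j * (x' i' j - xtil j) + Gy i))))^2/2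
        ≤ τ * ((1/(d:ℝ)) * phiStar (φ i) w)
          + (w - (yt i - τ * (-(a i j * (x' i' j - xtil j) + Gy i))))^2/2 := by
      intro w hw
      have h := hyNmin w hw
      have e1 : yt i - τ * (-(a i j * (x' i' j - xtil j) + Gy i))
          = yt i + τ * (a i j * (x' i' j - xtil j) + Gy i) := by ring
      have e2 : τ * ((1/(d:ℝ)) * phiStar (φ i) (yN i i' j j' i)) = (τ/(d:ℝ)) * phiStar (φ i) (yN i i' j j' i) := by ring
      have e3 : τ * ((1/(d:ℝ)) * phiStar (φ i) w) = (τ/(d:ℝ)) * phiStar (φ i) w := by ring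
      rw [e1, e2, e3]; exact h
    have h := masterX_core τ (γ/(d:ℝ)) hτ hμY hτγ' hYconv
      (fun z => (1/(d:ℝ)) * phiStar (φ i) z) hscY (yt i) (y i) (y' j' i) (yN i i' j j' i)
      (-(a i j * (x' i' j - xtil j) + Gy i)) (-(a i j' * (xt j' - xtil j') + Gy i))
      (hyi i) hy'm hyNm hpminY huminY
    have h' : (1/(d:ℝ)) * phiStar (φ i) (y' j' i) - (1/(d:ℝ)) * phiStar (φ i) (y i)
        + (-(a i j * (x' i' j - xtil j) + Gy i))*(y' j' i - y i)
        ≤ (1/(2*τ))*((1 - τ*(γ/(d:ℝ))/4)*(yt i - y i)^2 - (yN i i' j j' i - y i)^2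
            - (1/2)*(yt i - y' j' i)^2)
          + τ*((-(a i j * (x' i' j - xtil j) + Gy i)) - (-(a i j' * (xt j' - xtil j') + Gy i)))^2 := h
    calc (1/(d:ℝ)) * (phiStar (φ i) (y' j' i) - phiStar (φ i) (y i))
          - (a i j * (x' i' j - xtil j) + Gy i) * (y' j' i - y i)
        = (1/(d:ℝ)) * phiStar (φ i) (y' j' i) - (1/(d:ℝ)) * phiStar (φ i) (y i)
            + (-(a i j * (x' i' j - xtil j) + Gy i))*(y' j' i - y i) := by ring
      _ ≤ _ := h'
      _ = (1/(2*τ))*((1 - τ*γ/(4*(d:ℝ)))*(yt i - y i)^2) - (1/(2*τ))*(yN i i' j j' i - y i)^2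
            - (1/(2*τ))*((1/2)*(yt i - y' j' i)^2)
            + τ*(a i j' * (xt j' - xtil j') - a i j * (x' i' j - xtil j))^2 := by ring
  -- aggregates
  set Sxx := ∑ k, (xt k - x k) ^ 2 with hSxxe
  set Syy := ∑ k, (yt k - y k) ^ 2 with hSyye
  set Syty := ∑ k, (ytil k - y k) ^ 2 with hSytye
  set Sxtx := ∑ k, (xtil k - x k) ^ 2 with hSxtxe
  set Sxt := ∑ k, (xt k - xtil k) ^ 2 with hSxte
  set Syt := ∑ k, (yt k - ytil k) ^ 2 with hSyte
  set Sp := ∑ i', ∑ j, (xt j - x' i' j) ^ 2 with hSpe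
  set Sq := ∑ i, ∑ j', (yt i - y' j' i) ^ 2 with hSqe
  set SU := ∑ i : Fin n, ∑ i' : Fin n, ∑ j : Fin d, ∑ j' : Fin d, (xN i i' j j' j - x j) ^ 2 with hSUe
  set SR2 := ∑ i : Fin n, ∑ i' : Fin n, ∑ j : Fin d, ∑ j' : Fin d, (yN i i' j j' i - y i) ^ 2 with hSR2e
  set SVV := ∑ i : Fin n, ∑ i' : Fin n, ∑ j : Fin d, ∑ j' : Fin d,
      (a i j * (y' j' i - ytil i) - a i' j * (yt i' - ytil i')) ^ 2 with hSVVe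
  set SWW := ∑ i : Fin n, ∑ i' : Fin n, ∑ j : Fin d, ∑ j' : Fin d,
      (a i j' * (xt j' - xtil j') - a i j * (x' i' j - xtil j)) ^ 2 with hSWWe
  set LSUM := ∑ i : Fin n, ∑ i' : Fin n, ∑ j : Fin d, ∑ j' : Fin d,
      ((g j (x' i' j) - g j (x j) + (a i j * (y' j' i - ytil i) + Gx j) * (x' i' j - x j))
        + ((1/(d:ℝ)) * (phiStar (φ i) (y' j' i) - phiStar (φ i) (y i))
            - (a i j * (x' i' j - xtil j) + Gy i) * (y' j' i - y i))) with hLSUMe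
  -- nonnegativity
  have hSxx0 : (0:ℝ) ≤ Sxx := by rw [hSxxe]; exact Finset.sum_nonneg fun k _ => sq_nonneg _
  have hSyy0 : (0:ℝ) ≤ Syy := by rw [hSyye]; exact Finset.sum_nonneg fun k _ => sq_nonneg _
  have hSyty0 : (0:ℝ) ≤ Syty := by rw [hSytye]; exact Finset.sum_nonneg fun k _ => sq_nonneg _
  have hSxtx0 : (0:ℝ) ≤ Sxtx := by rw [hSxtxe]; exact Finset.sum_nonneg fun k _ => sq_nonneg _
  -- summed master inequality
  have hMsum : LSUM ≤ ∑ i : Fin n, ∑ i' : Fin n, ∑ j : Fin d, ∑ j' : Fin d,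
      (((1/(2*η))*((1 - η*μ/4)*(xt j - x j)^2) - (1/(2*η))*(xN i i' j j' j - x j)^2
          - (1/(2*η))*((1/2)*(xt j - x' i' j)^2)
          + η*(a i j * (y' j' i - ytil i) - a i' j * (yt i' - ytil i'))^2)
        + ((1/(2*τ))*((1 - τ*γ/(4*(d:ℝ)))*(yt i - y i)^2) - (1/(2*τ))*(yN i i' j j' i - y i)^2
          - (1/(2*τ))*((1/2)*(yt i - y' j' i)^2)
          + τ*(a i j' * (xt j' - xtil j') - a i j * (x' i' j - xtil j))^2)) := by
    rw [hLSUMe]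
    exact Finset.sum_le_sum fun i _ => Finset.sum_le_sum fun i' _ =>
      Finset.sum_le_sum fun j _ => Finset.sum_le_sum fun j' _ =>
        add_le_add (mX i i' j j') (mY i i' j j')
  have hRagg : (∑ i : Fin n, ∑ i' : Fin n, ∑ j : Fin d, ∑ j' : Fin d,
      (((1/(2*η))*((1 - η*μ/4)*(xt j - x j)^2) - (1/(2*η))*(xN i i' j j' j - x j)^2
          - (1/(2*η))*((1/2)*(xt j - x' i' j)^2)
          + η*(a i j * (y' j' i - ytil i) - a i' j * (yt i' - ytil i'))^2)
        + ((1/(2*τ))*((1 - τ*γ/(4*(d:ℝ)))*(yt i - y i)^2) - (1/(2*τ))*(yN i i' j j' i - y i)^2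
          - (1/(2*τ))*((1/2)*(yt i - y' j' i)^2)
          + τ*(a i j' * (xt j' - xtil j') - a i j * (x' i' j - xtil j))^2)))
      = (1/(2*η))*((1 - η*μ/4)*((n:ℝ)^2*(d:ℝ))*Sxx) - (1/(2*η))*SU
          - (1/(2*η))*((1/2)*((n:ℝ)*(d:ℝ))*Sp) + η*SVV
        + ((1/(2*τ))*((1 - τ*γ/(4*(d:ℝ)))*((n:ℝ)*(d:ℝ)^2)*Syy) - (1/(2*τ))*SR2
          - (1/(2*τ))*((1/2)*((n:ℝ)*(d:ℝ))*Sq) + τ*SWW) := by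
    rw [hSxxe, hSyye, hSpe, hSqe, hSUe, hSR2e, hSVVe, hSWWe]
    simp only [Finset.sum_add_distrib, Finset.sum_sub_distrib, Finset.sum_const,
      Finset.card_univ, Fintype.card_fin, nsmul_eq_mul, ← Finset.mul_sum]
    ring
  -- coordinate update identities
  have hupdx : ∀ (i' : Fin n) (j : Fin d),
      (∑ k, (xt k - Function.update xt j (x' i' j) k) ^ 2) = (xt j - x' i' j)^2 := by
    intro i' j
    rw [Finset.sum_eq_single j]
    · rw [Function.update_self]
    · intro k _ hk; rw [Function.update_of_ne hk]; simp
    · intro h; exact absurd (Finset.mem_univ j) h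
  have hupdy : ∀ (j' : Fin d) (i : Fin n),
      (∑ k, (yt k - Function.update yt i (y' j' i) k) ^ 2) = (yt i - y' j' i)^2 := by
    intro j' i
    rw [Finset.sum_eq_single i]
    · rw [Function.update_self]
    · intro k _ hk; rw [Function.update_of_ne hk]; simp
    · intro h; exact absurd (Finset.mem_univ i) h
  have hxNs : ∀ (i i' : Fin n) (j j' : Fin d),
      (∑ k, (xN i i' j j' k - x k) ^ 2) = Sxx - (xt j - x j)^2 + (xN i i' j j' j - x j)^2 := by
    intro i i' j j'
    have e1 : ∑ k, (xN i i' j j' k - x k)^2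
        = (xN i i' j j' j - x j)^2 + ∑ k ∈ Finset.univ.erase j, (xN i i' j j' k - x k)^2 :=
      (Finset.add_sum_erase _ _ (Finset.mem_univ j)).symm
    have e2 : ∑ k, (xt k - x k)^2
        = (xt j - x j)^2 + ∑ k ∈ Finset.univ.erase j, (xt k - x k)^2 :=
      (Finset.add_sum_erase _ _ (Finset.mem_univ j)).symm
    have e3 : ∑ k ∈ Finset.univ.erase j, (xN i i' j j' k - x k)^2
        = ∑ k ∈ Finset.univ.erase j, (xt k - x k)^2 :=
      Finset.sum_congr rfl fun k hk => by rw [(hxN i i' j j').1 k (Finset.mem_erase.1 hk).1]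
    rw [hSxxe, e1, e3, e2]; ring
  have hyNs : ∀ (i i' : Fin n) (j j' : Fin d),
      (∑ k, (yN i i' j j' k - y k) ^ 2) = Syy - (yt i - y i)^2 + (yN i i' j j' i - y i)^2 := by
    intro i i' j j'
    have e1 : ∑ k, (yN i i' j j' k - y k)^2
        = (yN i i' j j' i - y i)^2 + ∑ k ∈ Finset.univ.erase i, (yN i i' j j' k - y k)^2 :=
      (Finset.add_sum_erase _ _ (Finset.mem_univ i)).symm
    have e2 : ∑ k, (yt k - y k)^2
        = (yt i - y i)^2 + ∑ k ∈ Finset.univ.erase i, (yt k - y k)^2 :=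
      (Finset.add_sum_erase _ _ (Finset.mem_univ i)).symm
    have e3 : ∑ k ∈ Finset.univ.erase i, (yN i i' j j' k - y k)^2
        = ∑ k ∈ Finset.univ.erase i, (yt k - y k)^2 :=
      Finset.sum_congr rfl fun k hk => by rw [(hyN i i' j j').1 k (Finset.mem_erase.1 hk).1]
    rw [hSyye, e1, e3, e2]; ring
  -- goal sum rewrites
  have hS2 : (∑ i : Fin n, ∑ i' : Fin n, ∑ j : Fin d, ∑ j' : Fin d,
        ((1 - η * μ / (4 * (d : ℝ)) + 12 * R' ^ 2 * η * τ / ((n : ℝ) * (d : ℝ))) * Sxx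
          - (∑ k, (xN i i' j j' k - x k) ^ 2)
          - (1 / 2 - 8 * η * τ * R' ^ 2 / (n : ℝ))
            * (∑ k, (xt k - Function.update xt j (x' i' j) k) ^ 2)))
      = ((n:ℝ)^2*(d:ℝ)^2)*(1 - η * μ / (4 * (d : ℝ)) + 12 * R' ^ 2 * η * τ / ((n : ℝ) * (d : ℝ)))*Sxx
        - (((n:ℝ)^2*(d:ℝ)^2)*Sxx - ((n:ℝ)^2*(d:ℝ))*Sxx + SU)
        - (1 / 2 - 8 * η * τ * R' ^ 2 / (n : ℝ))*(((n:ℝ)*(d:ℝ))*Sp) := by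
    have e : ∀ (i i' : Fin n) (j j' : Fin d),
        ((1 - η * μ / (4 * (d : ℝ)) + 12 * R' ^ 2 * η * τ / ((n : ℝ) * (d : ℝ))) * Sxx
          - (∑ k, (xN i i' j j' k - x k) ^ 2)
          - (1 / 2 - 8 * η * τ * R' ^ 2 / (n : ℝ))
            * (∑ k, (xt k - Function.update xt j (x' i' j) k) ^ 2))
        = ((1 - η * μ / (4 * (d : ℝ)) + 12 * R' ^ 2 * η * τ / ((n : ℝ) * (d : ℝ))) * Sxx
          - (Sxx - (xt j - x j)^2 + (xN i i' j j' j - x j)^2)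
          - (1 / 2 - 8 * η * τ * R' ^ 2 / (n : ℝ)) * (xt j - x' i' j)^2) :=
      fun i i' j j' => by rw [hxNs i i' j j', hupdx i' j]
    calc (∑ i : Fin n, ∑ i' : Fin n, ∑ j : Fin d, ∑ j' : Fin d,
        ((1 - η * μ / (4 * (d : ℝ)) + 12 * R' ^ 2 * η * τ / ((n : ℝ) * (d : ℝ))) * Sxx
          - (∑ k, (xN i i' j j' k - x k) ^ 2)
          - (1 / 2 - 8 * η * τ * R' ^ 2 / (n : ℝ))
            * (∑ k, (xt k - Function.update xt j (x' i' j) k) ^ 2)))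
        = (∑ i : Fin n, ∑ i' : Fin n, ∑ j : Fin d, ∑ j' : Fin d,
          ((1 - η * μ / (4 * (d : ℝ)) + 12 * R' ^ 2 * η * τ / ((n : ℝ) * (d : ℝ))) * Sxx
          - (Sxx - (xt j - x j)^2 + (xN i i' j j' j - x j)^2)
          - (1 / 2 - 8 * η * τ * R' ^ 2 / (n : ℝ)) * (xt j - x' i' j)^2)) := by
          exact Finset.sum_congr rfl fun i _ => Finset.sum_congr rfl fun i' _ =>
            Finset.sum_congr rfl fun j _ => Finset.sum_congr rfl fun j' _ => e i i' j j'
      _ = ((n:ℝ)^2*(d:ℝ)^2)*(1 - η * μ / (4 * (d : ℝ)) + 12 * R' ^ 2 * η * τ / ((n : ℝ) * (d : ℝ)))*Sxx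
        - (((n:ℝ)^2*(d:ℝ)^2)*Sxx - ((n:ℝ)^2*(d:ℝ))*Sxx + SU)
        - (1 / 2 - 8 * η * τ * R' ^ 2 / (n : ℝ))*(((n:ℝ)*(d:ℝ))*Sp) := by
          rw [hSUe, hSpe]
          simp only [Finset.sum_add_distrib, Finset.sum_sub_distrib, Finset.sum_const,
            Finset.card_univ, Fintype.card_fin, nsmul_eq_mul, ← Finset.mul_sum]
          ring
  have hS3 : (∑ i : Fin n, ∑ i' : Fin n, ∑ j : Fin d, ∑ j' : Fin d,
        ((1 - τ * γ / (4 * (n : ℝ) * (d : ℝ)) + 12 * R ^ 2 * η * τ / ((n : ℝ) * (d : ℝ))) * Syy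
          - (∑ k, (yN i i' j j' k - y k) ^ 2)
          - (1 / 2 - 8 * η * τ * R ^ 2 / (d : ℝ))
            * (∑ k, (yt k - Function.update yt i (y' j' i) k) ^ 2)))
      = ((n:ℝ)^2*(d:ℝ)^2)*(1 - τ * γ / (4 * (n : ℝ) * (d : ℝ)) + 12 * R ^ 2 * η * τ / ((n : ℝ) * (d : ℝ)))*Syy
        - (((n:ℝ)^2*(d:ℝ)^2)*Syy - ((n:ℝ)*(d:ℝ)^2)*Syy + SR2)
        - (1 / 2 - 8 * η * τ * R ^ 2 / (d : ℝ))*(((n:ℝ)*(d:ℝ))*Sq) := by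
    have e : ∀ (i i' : Fin n) (j j' : Fin d),
        ((1 - τ * γ / (4 * (n : ℝ) * (d : ℝ)) + 12 * R ^ 2 * η * τ / ((n : ℝ) * (d : ℝ))) * Syy
          - (∑ k, (yN i i' j j' k - y k) ^ 2)
          - (1 / 2 - 8 * η * τ * R ^ 2 / (d : ℝ))
            * (∑ k, (yt k - Function.update yt i (y' j' i) k) ^ 2))
        = ((1 - τ * γ / (4 * (n : ℝ) * (d : ℝ)) + 12 * R ^ 2 * η * τ / ((n : ℝ) * (d : ℝ))) * Syy
          - (Syy - (yt i - y i)^2 + (yN i i' j j' i - y i)^2)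
          - (1 / 2 - 8 * η * τ * R ^ 2 / (d : ℝ)) * (yt i - y' j' i)^2) :=
      fun i i' j j' => by rw [hyNs i i' j j', hupdy j' i]
    calc (∑ i : Fin n, ∑ i' : Fin n, ∑ j : Fin d, ∑ j' : Fin d,
        ((1 - τ * γ / (4 * (n : ℝ) * (d : ℝ)) + 12 * R ^ 2 * η * τ / ((n : ℝ) * (d : ℝ))) * Syy
          - (∑ k, (yN i i' j j' k - y k) ^ 2)
          - (1 / 2 - 8 * η * τ * R ^ 2 / (d : ℝ))
            * (∑ k, (yt k - Function.update yt i (y' j' i) k) ^ 2)))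
        = (∑ i : Fin n, ∑ i' : Fin n, ∑ j : Fin d, ∑ j' : Fin d,
          ((1 - τ * γ / (4 * (n : ℝ) * (d : ℝ)) + 12 * R ^ 2 * η * τ / ((n : ℝ) * (d : ℝ))) * Syy
          - (Syy - (yt i - y i)^2 + (yN i i' j j' i - y i)^2)
          - (1 / 2 - 8 * η * τ * R ^ 2 / (d : ℝ)) * (yt i - y' j' i)^2)) := by
          exact Finset.sum_congr rfl fun i _ => Finset.sum_congr rfl fun i' _ =>
            Finset.sum_congr rfl fun j _ => Finset.sum_congr rfl fun j' _ => e i i' j j'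
      _ = ((n:ℝ)^2*(d:ℝ)^2)*(1 - τ * γ / (4 * (n : ℝ) * (d : ℝ)) + 12 * R ^ 2 * η * τ / ((n : ℝ) * (d : ℝ)))*Syy
        - (((n:ℝ)^2*(d:ℝ)^2)*Syy - ((n:ℝ)*(d:ℝ)^2)*Syy + SR2)
        - (1 / 2 - 8 * η * τ * R ^ 2 / (d : ℝ))*(((n:ℝ)*(d:ℝ))*Sq) := by
          rw [hSR2e, hSqe]
          simp only [Finset.sum_add_distrib, Finset.sum_sub_distrib, Finset.sum_const,
            Finset.card_univ, Fintype.card_fin, nsmul_eq_mul, ← Finset.mul_sum]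
          ring
  -- the bilinear/functional identity
  have hLagg : (∑ i : Fin n, ∑ i' : Fin n, ∑ j : Fin d, ∑ j' : Fin d,
      (F (x' i') y - F x (y' j'))) = (d:ℝ) * LSUM := by
    have ecanx : ∀ (j j' : Fin d),
        (∑ i0 : Fin n, (a i0 j * (y' j' i0 - ytil i0) + Gx j)) = ∑ i0 : Fin n, a i0 j * y' j' i0 := by
      intro j j'
      rw [Finset.sum_add_distrib, Finset.sum_const, Finset.card_univ, Fintype.card_fin,
        nsmul_eq_mul, hGx j, mul_div_cancel₀ _ hn0', ← Finset.sum_add_distrib]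
      exact Finset.sum_congr rfl fun i0 _ => by ring
    have ecany : ∀ (i : Fin n) (i' : Fin n),
        (∑ j0 : Fin d, (a i j0 * (x' i' j0 - xtil j0) + Gy i)) = ∑ j0 : Fin d, a i j0 * x' i' j0 := by
      intro i i'
      rw [Finset.sum_add_distrib, Finset.sum_const, Finset.card_univ, Fintype.card_fin,
        nsmul_eq_mul, hGy i, mul_div_cancel₀ _ hd0', ← Finset.sum_add_distrib]
      exact Finset.sum_congr rfl fun j0 _ => by ring
    have E0 : LSUM = (∑ i : Fin n, ∑ i' : Fin n, ∑ j : Fin d, ∑ j' : Fin d, g j (x' i' j))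
        - (∑ i : Fin n, ∑ i' : Fin n, ∑ j : Fin d, ∑ j' : Fin d, g j (x j))
        + (∑ i : Fin n, ∑ i' : Fin n, ∑ j : Fin d, ∑ j' : Fin d,
            (a i j * (y' j' i - ytil i) + Gx j) * (x' i' j - x j))
        + ((∑ i : Fin n, ∑ i' : Fin n, ∑ j : Fin d, ∑ j' : Fin d,
            (1/(d:ℝ)) * (phiStar (φ i) (y' j' i) - phiStar (φ i) (y i)))
          - (∑ i : Fin n, ∑ i' : Fin n, ∑ j : Fin d, ∑ j' : Fin d,
            (a i j * (x' i' j - xtil j) + Gy i) * (y' j' i - y i))) := by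
      rw [hLSUMe]; simp only [Finset.sum_add_distrib, Finset.sum_sub_distrib]
    have E1 : (∑ i : Fin n, ∑ i' : Fin n, ∑ j : Fin d, ∑ j' : Fin d, g j (x' i' j))
        = (n:ℝ)*(d:ℝ)*(∑ i' : Fin n, ∑ j : Fin d, g j (x' i' j)) :=
      sum4_i'j (fun i' j => g j (x' i' j))
    have E2 : (∑ i : Fin n, ∑ i' : Fin n, ∑ j : Fin d, ∑ j' : Fin d, g j (x j))
        = (n:ℝ)^2*(d:ℝ)*(∑ j : Fin d, g j (x j)) :=
      sum4_j n (fun j => g j (x j))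
    have E3 : (∑ i : Fin n, ∑ i' : Fin n, ∑ j : Fin d, ∑ j' : Fin d,
        (a i j * (y' j' i - ytil i) + Gx j) * (x' i' j - x j))
        = (∑ i : Fin n, ∑ i' : Fin n, ∑ j : Fin d, ∑ j' : Fin d, a i j * (y' j' i * x' i' j))
          - (n:ℝ)*(∑ j' : Fin d, ∑ i0 : Fin n, ∑ j0 : Fin d, a i0 j0 * (y' j' i0 * x j0)) := by
      rw [comm_i_last (fun i i' j j' => (a i j * (y' j' i - ytil i) + Gx j) * (x' i' j - x j))]
      have e1 : ∀ (i' : Fin n) (j j' : Fin d),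
          (∑ i0 : Fin n, (a i0 j * (y' j' i0 - ytil i0) + Gx j) * (x' i' j - x j))
          = (∑ i0 : Fin n, a i0 j * (y' j' i0 * x' i' j))
            - (∑ i0 : Fin n, a i0 j * (y' j' i0 * x j)) := by
        intro i' j j'
        rw [← Finset.sum_mul, ecanx j j', Finset.sum_mul, ← Finset.sum_sub_distrib]
        exact Finset.sum_congr rfl fun i0 _ => by ring
      calc (∑ i' : Fin n, ∑ j : Fin d, ∑ j' : Fin d, ∑ i : Fin n,
          (a i j * (y' j' i - ytil i) + Gx j) * (x' i' j - x j))
          = ∑ i' : Fin n, ∑ j : Fin d, ∑ j' : Fin d,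
              ((∑ i0 : Fin n, a i0 j * (y' j' i0 * x' i' j))
                - (∑ i0 : Fin n, a i0 j * (y' j' i0 * x j))) :=
            Finset.sum_congr rfl fun i' _ => Finset.sum_congr rfl fun j _ =>
              Finset.sum_congr rfl fun j' _ => e1 i' j j'
        _ = (∑ i' : Fin n, ∑ j : Fin d, ∑ j' : Fin d, ∑ i0 : Fin n, a i0 j * (y' j' i0 * x' i' j))
            - (n:ℝ)*(∑ j : Fin d, ∑ j' : Fin d, ∑ i0 : Fin n, a i0 j * (y' j' i0 * x j)) := by
            simp only [Finset.sum_sub_distrib, Finset.sum_const, Finset.card_univ,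
              Fintype.card_fin, nsmul_eq_mul, ← Finset.mul_sum]
        _ = (∑ i : Fin n, ∑ i' : Fin n, ∑ j : Fin d, ∑ j' : Fin d, a i j * (y' j' i * x' i' j))
            - (n:ℝ)*(∑ j' : Fin d, ∑ i0 : Fin n, ∑ j0 : Fin d, a i0 j0 * (y' j' i0 * x j0)) := by
            rw [← comm_i_last (fun i i' j j' => a i j * (y' j' i * x' i' j)),
              comm3_rot (fun j j' i0 => a i0 j * (y' j' i0 * x j))]
    have E4 : (∑ i : Fin n, ∑ i' : Fin n, ∑ j : Fin d, ∑ j' : Fin d,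
        (1/(d:ℝ)) * (phiStar (φ i) (y' j' i) - phiStar (φ i) (y i)))
        = (n:ℝ)*(∑ j' : Fin d, ∑ i0 : Fin n,
            (phiStar (φ i0) (y' j' i0) - phiStar (φ i0) (y i0))) := by
      have h1 := sum4_ij' (fun i j' => (1/(d:ℝ)) * (phiStar (φ i) (y' j' i) - phiStar (φ i) (y i)))
      rw [h1]
      have h2 : (∑ i : Fin n, ∑ j' : Fin d,
          (1/(d:ℝ)) * (phiStar (φ i) (y' j' i) - phiStar (φ i) (y i)))
          = (1/(d:ℝ))*(∑ j' : Fin d, ∑ i0 : Fin n,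
              (phiStar (φ i0) (y' j' i0) - phiStar (φ i0) (y i0))) := by
        rw [Finset.sum_comm]
        simp only [← Finset.mul_sum]
      rw [h2]
      field_simp
    have E5 : (∑ i : Fin n, ∑ i' : Fin n, ∑ j : Fin d, ∑ j' : Fin d,
        (a i j * (x' i' j - xtil j) + Gy i) * (y' j' i - y i))
        = (∑ i : Fin n, ∑ i' : Fin n, ∑ j : Fin d, ∑ j' : Fin d, a i j * (y' j' i * x' i' j))
          - (d:ℝ)*(∑ i' : Fin n, ∑ i0 : Fin n, ∑ j0 : Fin d, a i0 j0 * (y i0 * x' i' j0)) := by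
      rw [comm_j_last (fun i i' j j' => (a i j * (x' i' j - xtil j) + Gy i) * (y' j' i - y i))]
      have e1 : ∀ (i i' : Fin n) (j' : Fin d),
          (∑ j0 : Fin d, (a i j0 * (x' i' j0 - xtil j0) + Gy i) * (y' j' i - y i))
          = (∑ j0 : Fin d, a i j0 * (y' j' i * x' i' j0))
            - (∑ j0 : Fin d, a i j0 * (y i * x' i' j0)) := by
        intro i i' j'
        rw [← Finset.sum_mul, ecany i i', Finset.sum_mul, ← Finset.sum_sub_distrib]
        exact Finset.sum_congr rfl fun j0 _ => by ring
      calc (∑ i : Fin n, ∑ i' : Fin n, ∑ j' : Fin d, ∑ j : Fin d,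
          (a i j * (x' i' j - xtil j) + Gy i) * (y' j' i - y i))
          = ∑ i : Fin n, ∑ i' : Fin n, ∑ j' : Fin d,
              ((∑ j0 : Fin d, a i j0 * (y' j' i * x' i' j0))
                - (∑ j0 : Fin d, a i j0 * (y i * x' i' j0))) :=
            Finset.sum_congr rfl fun i _ => Finset.sum_congr rfl fun i' _ =>
              Finset.sum_congr rfl fun j' _ => e1 i i' j'
        _ = (∑ i : Fin n, ∑ i' : Fin n, ∑ j' : Fin d, ∑ j0 : Fin d, a i j0 * (y' j' i * x' i' j0))
            - (d:ℝ)*(∑ i : Fin n, ∑ i' : Fin n, ∑ j0 : Fin d, a i j0 * (y i * x' i' j0)) := by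
            simp only [Finset.sum_sub_distrib, Finset.sum_const, Finset.card_univ,
              Fintype.card_fin, nsmul_eq_mul, ← Finset.mul_sum]
        _ = (∑ i : Fin n, ∑ i' : Fin n, ∑ j : Fin d, ∑ j' : Fin d, a i j * (y' j' i * x' i' j))
            - (d:ℝ)*(∑ i' : Fin n, ∑ i0 : Fin n, ∑ j0 : Fin d, a i0 j0 * (y i0 * x' i' j0)) := by
            rw [← comm_j_last (fun i i' j j' => a i j * (y' j' i * x' i' j)),
              show (∑ i : Fin n, ∑ i' : Fin n, ∑ j0 : Fin d, a i j0 * (y i * x' i' j0))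
                = (∑ i' : Fin n, ∑ i0 : Fin n, ∑ j0 : Fin d, a i0 j0 * (y i0 * x' i' j0))
                from Finset.sum_comm]
    have eAF : ∀ i' : Fin n, F (x' i') y
        = (1/(n:ℝ))*(∑ i0 : Fin n, ∑ j0 : Fin d, a i0 j0 * (y i0 * x' i' j0))
          - (1/(n:ℝ))*(∑ i0 : Fin n, phiStar (φ i0) (y i0))
          + ∑ j0 : Fin d, g j0 (x' i' j0) := by
      intro i'
      rw [hF]
      rw [show (∑ i0 : Fin n, y i0 * ∑ j0 : Fin d, a i0 j0 * x' i' j0)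
          = ∑ i0 : Fin n, ∑ j0 : Fin d, a i0 j0 * (y i0 * x' i' j0) from
        Finset.sum_congr rfl fun i0 _ => by
          rw [Finset.mul_sum]; exact Finset.sum_congr rfl fun j0 _ => by ring]
    have eBF : ∀ j' : Fin d, F x (y' j')
        = (1/(n:ℝ))*(∑ i0 : Fin n, ∑ j0 : Fin d, a i0 j0 * (y' j' i0 * x j0))
          - (1/(n:ℝ))*(∑ i0 : Fin n, phiStar (φ i0) (y' j' i0))
          + ∑ j0 : Fin d, g j0 (x j0) := by
      intro j'
      rw [hF]
      rw [show (∑ i0 : Fin n, y' j' i0 * ∑ j0 : Fin d, a i0 j0 * x j0)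
          = ∑ i0 : Fin n, ∑ j0 : Fin d, a i0 j0 * (y' j' i0 * x j0) from
        Finset.sum_congr rfl fun i0 _ => by
          rw [Finset.mul_sum]; exact Finset.sum_congr rfl fun j0 _ => by ring]
    have F1 : (∑ i : Fin n, ∑ i' : Fin n, ∑ j : Fin d, ∑ j' : Fin d, (F (x' i') y - F x (y' j')))
        = (∑ i : Fin n, ∑ i' : Fin n, ∑ j : Fin d, ∑ j' : Fin d, F (x' i') y)
          - (∑ i : Fin n, ∑ i' : Fin n, ∑ j : Fin d, ∑ j' : Fin d, F x (y' j')) := by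
      simp only [Finset.sum_sub_distrib]
    have F2 : (∑ i : Fin n, ∑ i' : Fin n, ∑ j : Fin d, ∑ j' : Fin d, F (x' i') y)
        = (n:ℝ)*(d:ℝ)^2*(∑ i' : Fin n, F (x' i') y) := sum4_i' d (fun i' => F (x' i') y)
    have F3 : (∑ i : Fin n, ∑ i' : Fin n, ∑ j : Fin d, ∑ j' : Fin d, F x (y' j'))
        = (n:ℝ)^2*(d:ℝ)*(∑ j' : Fin d, F x (y' j')) := sum4_j' n (fun j' => F x (y' j'))
    have F4 : (∑ i' : Fin n, F (x' i') y)
        = (1/(n:ℝ))*(∑ i' : Fin n, ∑ i0 : Fin n, ∑ j0 : Fin d, a i0 j0 * (y i0 * x' i' j0))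
          - (n:ℝ)*((1/(n:ℝ))*(∑ i0 : Fin n, phiStar (φ i0) (y i0)))
          + (∑ i' : Fin n, ∑ j0 : Fin d, g j0 (x' i' j0)) := by
      simp only [eAF]
      simp only [Finset.sum_add_distrib, Finset.sum_sub_distrib, Finset.sum_const,
        Finset.card_univ, Fintype.card_fin, nsmul_eq_mul, ← Finset.mul_sum]
    have F5 : (∑ j' : Fin d, F x (y' j'))
        = (1/(n:ℝ))*(∑ j' : Fin d, ∑ i0 : Fin n, ∑ j0 : Fin d, a i0 j0 * (y' j' i0 * x j0))
          - (1/(n:ℝ))*(∑ j' : Fin d, ∑ i0 : Fin n, phiStar (φ i0) (y' j' i0))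
          + (d:ℝ)*(∑ j0 : Fin d, g j0 (x j0)) := by
      simp only [eBF]
      simp only [Finset.sum_add_distrib, Finset.sum_sub_distrib, Finset.sum_const,
        Finset.card_univ, Fintype.card_fin, nsmul_eq_mul, ← Finset.mul_sum]
    have eT2 : (∑ j' : Fin d, ∑ i0 : Fin n,
        (phiStar (φ i0) (y' j' i0) - phiStar (φ i0) (y i0)))
        = (∑ j' : Fin d, ∑ i0 : Fin n, phiStar (φ i0) (y' j' i0))
          - (d:ℝ)*(∑ i0 : Fin n, phiStar (φ i0) (y i0)) := by
      simp only [Finset.sum_sub_distrib, Finset.sum_const, Finset.card_univ,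
        Fintype.card_fin, nsmul_eq_mul]
    have EF : (∑ i : Fin n, ∑ i' : Fin n, ∑ j : Fin d, ∑ j' : Fin d, (F (x' i') y - F x (y' j')))
        = (d:ℝ)^2*(∑ i' : Fin n, ∑ i0 : Fin n, ∑ j0 : Fin d, a i0 j0 * (y i0 * x' i' j0))
          - (n:ℝ)*(d:ℝ)^2*(∑ i0 : Fin n, phiStar (φ i0) (y i0))
          + (n:ℝ)*(d:ℝ)^2*(∑ i' : Fin n, ∑ j0 : Fin d, g j0 (x' i' j0))
          - (n:ℝ)*(d:ℝ)*(∑ j' : Fin d, ∑ i0 : Fin n, ∑ j0 : Fin d, a i0 j0 * (y' j' i0 * x j0))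
          + (n:ℝ)*(d:ℝ)*(∑ j' : Fin d, ∑ i0 : Fin n, phiStar (φ i0) (y' j' i0))
          - (n:ℝ)^2*(d:ℝ)^2*(∑ j0 : Fin d, g j0 (x j0)) := by
      rw [F1, F2, F3, F4, F5]
      field_simp
      ring
    linear_combination EF - (d:ℝ)*E0 - (d:ℝ)*E1 + (d:ℝ)*E2 - (d:ℝ)*E3 - (d:ℝ)*E4 + (d:ℝ)*E5
      - (n:ℝ)*(d:ℝ)*eT2
  -- variance bounds
  have hSVVb : SVV ≤ R^2*((7/3)*((n:ℝ)*(d:ℝ))*Syt + 4*(n:ℝ)*Sq) := by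
    have perj : ∀ j : Fin d,
        (∑ i : Fin n, ∑ i' : Fin n, ∑ j' : Fin d, (a i j * (y' j' i - ytil i) - a i' j * (yt i' - ytil i')) ^ 2)
        ≤ (7/3)*((n:ℝ)*(d:ℝ))*(∑ i0 : Fin n, (a i0 j * (yt i0 - ytil i0))^2)
          + 4*(n:ℝ)*(∑ i0 : Fin n, ∑ j'0 : Fin d, (a i0 j)^2 * (yt i0 - y' j'0 i0)^2) := by
      intro j
      set m := (∑ i' : Fin n, a i' j * (yt i' - ytil i'))/(n:ℝ) with hm
      have hXsum : (∑ i' : Fin n, a i' j * (yt i' - ytil i')) = (n:ℝ)*m := by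
        rw [hm]; field_simp
      have hcross : (∑ i : Fin n, ∑ i' : Fin n, ∑ j' : Fin d,
          ((a i j * (y' j' i - ytil i) - m)*(a i' j * (yt i' - ytil i') - m))) = 0 := by
        refine Finset.sum_eq_zero fun i _ => ?_
        have hm0 : (∑ i' : Fin n, (a i' j * (yt i' - ytil i') - m)) = 0 := by
          rw [Finset.sum_sub_distrib, Finset.sum_const, Finset.card_univ, Fintype.card_fin,
            nsmul_eq_mul, hXsum]; ring
        calc ∑ i' : Fin n, ∑ j', ((a i j * (y' j' i - ytil i) - m)*(a i' j * (yt i' - ytil i') - m))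
            = ∑ i' : Fin n, (∑ j', (a i j * (y' j' i - ytil i) - m)) * (a i' j * (yt i' - ytil i') - m) :=
              Finset.sum_congr rfl fun i' _ => (Finset.sum_mul _ _ _).symm
          _ = (∑ j', (a i j * (y' j' i - ytil i) - m)) * (∑ i' : Fin n, (a i' j * (yt i' - ytil i') - m)) :=
              (Finset.mul_sum _ _ _).symm
          _ = 0 := by rw [hm0, mul_zero]
      have expand : (∑ i : Fin n, ∑ i' : Fin n, ∑ j' : Fin d, (a i j * (y' j' i - ytil i) - a i' j * (yt i' - ytil i')) ^ 2)
          = (n:ℝ)*(∑ i : Fin n, ∑ j' : Fin d, (a i j * (y' j' i - ytil i) - m)^2)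
            + (n:ℝ)*(d:ℝ)*(∑ i' : Fin n, (a i' j * (yt i' - ytil i') - m)^2) := by
        have e : ∀ (i i' : Fin n) (j' : Fin d),
            (a i j * (y' j' i - ytil i) - a i' j * (yt i' - ytil i')) ^ 2
            = (a i j * (y' j' i - ytil i) - m)^2
              - 2*((a i j * (y' j' i - ytil i) - m)*(a i' j * (yt i' - ytil i') - m))
              + (a i' j * (yt i' - ytil i') - m)^2 := by intros; ring
        calc (∑ i : Fin n, ∑ i' : Fin n, ∑ j' : Fin d, (a i j * (y' j' i - ytil i) - a i' j * (yt i' - ytil i')) ^ 2)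
            = (∑ i : Fin n, ∑ i' : Fin n, ∑ j' : Fin d, (a i j * (y' j' i - ytil i) - m)^2)
              - 2*(∑ i : Fin n, ∑ i' : Fin n, ∑ j' : Fin d,
                  ((a i j * (y' j' i - ytil i) - m)*(a i' j * (yt i' - ytil i') - m)))
              + (∑ i : Fin n, ∑ i' : Fin n, ∑ j' : Fin d, (a i' j * (yt i' - ytil i') - m)^2) := by
              simp only [e, Finset.sum_add_distrib, Finset.sum_sub_distrib, ← Finset.mul_sum]
          _ = (∑ i : Fin n, ∑ i' : Fin n, ∑ j' : Fin d, (a i j * (y' j' i - ytil i) - m)^2)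
              + (∑ i : Fin n, ∑ i' : Fin n, ∑ j' : Fin d, (a i' j * (yt i' - ytil i') - m)^2) := by rw [hcross]; ring
          _ = (n:ℝ)*(∑ i : Fin n, ∑ j' : Fin d, (a i j * (y' j' i - ytil i) - m)^2)
              + (n:ℝ)*(d:ℝ)*(∑ i' : Fin n, (a i' j * (yt i' - ytil i') - m)^2) := by
              simp only [Finset.sum_const, Finset.card_univ, Fintype.card_fin,
                nsmul_eq_mul, ← Finset.mul_sum]
              ring
      have hA : (∑ i : Fin n, ∑ j' : Fin d, (a i j * (y' j' i - ytil i) - m)^2)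
          ≤ (4/3)*(d:ℝ)*(∑ i0 : Fin n, (a i0 j * (yt i0 - ytil i0) - m)^2)
            + 4*(∑ i0 : Fin n, ∑ j'0 : Fin d, (a i0 j)^2*(yt i0 - y' j'0 i0)^2) := by
        have e : ∀ (i : Fin n) (j' : Fin d), (a i j * (y' j' i - ytil i) - m)^2
            ≤ (4/3)*(a i j * (yt i - ytil i) - m)^2 + 4*((a i j)^2*(yt i - y' j' i)^2) := by
          intro i j'
          linarith only [sq_nonneg ((a i j * (yt i - ytil i) - m)
            - 3*(a i j * (y' j' i - yt i)))]
        calc (∑ i : Fin n, ∑ j' : Fin d, (a i j * (y' j' i - ytil i) - m)^2)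
            ≤ ∑ i : Fin n, ∑ j' : Fin d, ((4/3)*(a i j * (yt i - ytil i) - m)^2
                + 4*((a i j)^2*(yt i - y' j' i)^2)) :=
              Finset.sum_le_sum fun i _ => Finset.sum_le_sum fun j' _ => e i j'
          _ = (4/3)*(d:ℝ)*(∑ i0 : Fin n, (a i0 j * (yt i0 - ytil i0) - m)^2)
              + 4*(∑ i0 : Fin n, ∑ j'0 : Fin d, (a i0 j)^2*(yt i0 - y' j'0 i0)^2) := by
              simp only [Finset.sum_add_distrib, Finset.sum_const, Finset.card_univ,
                Fintype.card_fin, nsmul_eq_mul, ← Finset.mul_sum]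
              ring
      have hB : (∑ i0 : Fin n, (a i0 j * (yt i0 - ytil i0) - m)^2)
          ≤ ∑ i0 : Fin n, (a i0 j * (yt i0 - ytil i0))^2 := by
        have e2 : ∀ i0 : Fin n, (a i0 j * (yt i0 - ytil i0) - m)^2
            = (a i0 j * (yt i0 - ytil i0))^2 - 2*m*(a i0 j * (yt i0 - ytil i0)) + m^2 := by
          intro; ring
        have e3 : (∑ i0 : Fin n, (a i0 j * (yt i0 - ytil i0) - m)^2)
            = (∑ i0 : Fin n, (a i0 j * (yt i0 - ytil i0))^2)
              - 2*m*(∑ i0 : Fin n, a i0 j * (yt i0 - ytil i0)) + (n:ℝ)*m^2 := by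
          calc (∑ i0 : Fin n, (a i0 j * (yt i0 - ytil i0) - m)^2)
              = ∑ i0 : Fin n, ((a i0 j * (yt i0 - ytil i0))^2
                  - 2*m*(a i0 j * (yt i0 - ytil i0)) + m^2) := by simp only [e2]
            _ = (∑ i0 : Fin n, (a i0 j * (yt i0 - ytil i0))^2)
              - 2*m*(∑ i0 : Fin n, a i0 j * (yt i0 - ytil i0)) + (n:ℝ)*m^2 := by
                simp only [Finset.sum_add_distrib, Finset.sum_sub_distrib, Finset.sum_const,
                  Finset.card_univ, Fintype.card_fin, nsmul_eq_mul, ← Finset.mul_sum]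
        rw [e3, hXsum]
        have : (0:ℝ) ≤ (n:ℝ)*m^2 := mul_nonneg (le_of_lt hn0) (sq_nonneg m)
        linarith only [this]
      have mA := mul_le_mul_of_nonneg_left hA (le_of_lt hn0)
      have mB := mul_le_mul_of_nonneg_left hB
        (by positivity : (0:ℝ) ≤ (7/3)*((n:ℝ)*(d:ℝ)))
      linarith only [expand, mA, mB]
    have step : SVV ≤ ∑ j : Fin d, ((7/3)*((n:ℝ)*(d:ℝ))*(∑ i0 : Fin n, (a i0 j * (yt i0 - ytil i0))^2)
          + 4*(n:ℝ)*(∑ i0 : Fin n, ∑ j'0 : Fin d, (a i0 j)^2 * (yt i0 - y' j'0 i0)^2)) := by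
      rw [hSVVe, comm_j_first (fun i i' j j' =>
        (a i j * (y' j' i - ytil i) - a i' j * (yt i' - ytil i')) ^ 2)]
      exact Finset.sum_le_sum fun j _ => perj j
    have hrow2 : (∑ j : Fin d, ∑ i0 : Fin n, (a i0 j * (yt i0 - ytil i0))^2) ≤ R^2 * Syt := by
      rw [Finset.sum_comm]
      calc (∑ i0 : Fin n, ∑ j : Fin d, (a i0 j * (yt i0 - ytil i0))^2)
          = ∑ i0 : Fin n, (∑ j : Fin d, (a i0 j)^2) * (yt i0 - ytil i0)^2 := by
            refine Finset.sum_congr rfl fun i0 _ => ?_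
            rw [Finset.sum_mul]
            exact Finset.sum_congr rfl fun j _ => by ring
        _ ≤ ∑ i0 : Fin n, R^2 * (yt i0 - ytil i0)^2 :=
            Finset.sum_le_sum fun i0 _ =>
              mul_le_mul_of_nonneg_right (rowsq i0) (sq_nonneg _)
        _ = R^2 * Syt := by rw [hSyte]; exact (Finset.mul_sum _ _ _).symm
    have hcol2 : (∑ j : Fin d, ∑ i0 : Fin n, ∑ j'0 : Fin d, (a i0 j)^2 * (yt i0 - y' j'0 i0)^2) ≤ R^2 * Sq := by
      rw [comm3_rot (fun j i0 j'0 => (a i0 j)^2 * (yt i0 - y' j'0 i0)^2)]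
      calc (∑ i0 : Fin n, ∑ j'0 : Fin d, ∑ j : Fin d, (a i0 j)^2 * (yt i0 - y' j'0 i0)^2)
          = ∑ i0 : Fin n, ∑ j'0 : Fin d, (∑ j : Fin d, (a i0 j)^2) * (yt i0 - y' j'0 i0)^2 := by
            refine Finset.sum_congr rfl fun i0 _ => Finset.sum_congr rfl fun j'0 _ => ?_
            exact (Finset.sum_mul _ _ _).symm
        _ ≤ ∑ i0 : Fin n, ∑ j'0 : Fin d, R^2 * (yt i0 - y' j'0 i0)^2 :=
            Finset.sum_le_sum fun i0 _ => Finset.sum_le_sum fun j'0 _ =>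
              mul_le_mul_of_nonneg_right (rowsq i0) (sq_nonneg _)
        _ = R^2 * Sq := by
            rw [hSqe, Finset.mul_sum]
            exact Finset.sum_congr rfl fun i0 _ => (Finset.mul_sum _ _ _).symm
    have split : (∑ j : Fin d, ((7/3)*((n:ℝ)*(d:ℝ))*(∑ i0 : Fin n, (a i0 j * (yt i0 - ytil i0))^2)
          + 4*(n:ℝ)*(∑ i0 : Fin n, ∑ j'0 : Fin d, (a i0 j)^2 * (yt i0 - y' j'0 i0)^2)))
        = (7/3)*((n:ℝ)*(d:ℝ))*(∑ j : Fin d, ∑ i0 : Fin n, (a i0 j * (yt i0 - ytil i0))^2)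
          + 4*(n:ℝ)*(∑ j : Fin d, ∑ i0 : Fin n, ∑ j'0 : Fin d, (a i0 j)^2 * (yt i0 - y' j'0 i0)^2) := by
      simp only [Finset.sum_add_distrib, ← Finset.mul_sum]
    have m1 := mul_le_mul_of_nonneg_left hrow2 (by positivity : (0:ℝ) ≤ (7/3)*((n:ℝ)*(d:ℝ)))
    have m2 := mul_le_mul_of_nonneg_left hcol2 (by norm_num : (0:ℝ) ≤ 4*(n:ℝ)) 
    linarith only [step, split, m1, m2]
  have hSWWb : SWW ≤ R'^2*((7/3)*((n:ℝ)*(d:ℝ))*Sxt + 4*(d:ℝ)*Sp) := by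
    have peri : ∀ i : Fin n,
        (∑ i' : Fin n, ∑ j : Fin d, ∑ j' : Fin d,
          (a i j' * (xt j' - xtil j') - a i j * (x' i' j - xtil j)) ^ 2)
        ≤ (7/3)*((n:ℝ)*(d:ℝ))*(∑ j0 : Fin d, (a i j0 * (xt j0 - xtil j0))^2)
          + 4*(d:ℝ)*(∑ i'0 : Fin n, ∑ j0 : Fin d, (a i j0)^2 * (xt j0 - x' i'0 j0)^2) := by
      intro i
      set m := (∑ j' : Fin d, a i j' * (xt j' - xtil j'))/(d:ℝ) with hm
      have hXsum : (∑ j' : Fin d, a i j' * (xt j' - xtil j')) = (d:ℝ)*m := by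
        rw [hm]; field_simp
      have hm0 : (∑ j' : Fin d, (a i j' * (xt j' - xtil j') - m)) = 0 := by
        rw [Finset.sum_sub_distrib, Finset.sum_const, Finset.card_univ, Fintype.card_fin,
          nsmul_eq_mul, hXsum]; ring
      have hcross : (∑ i' : Fin n, ∑ j : Fin d, ∑ j' : Fin d,
          ((a i j' * (xt j' - xtil j') - m)*(a i j * (x' i' j - xtil j) - m))) = 0 := by
        refine Finset.sum_eq_zero fun i' _ => Finset.sum_eq_zero fun j _ => ?_
        calc ∑ j' : Fin d, ((a i j' * (xt j' - xtil j') - m)*(a i j * (x' i' j - xtil j) - m))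
            = (∑ j' : Fin d, (a i j' * (xt j' - xtil j') - m)) * (a i j * (x' i' j - xtil j) - m) :=
              (Finset.sum_mul _ _ _).symm
          _ = 0 := by rw [hm0, zero_mul]
      have expand : (∑ i' : Fin n, ∑ j : Fin d, ∑ j' : Fin d,
          (a i j' * (xt j' - xtil j') - a i j * (x' i' j - xtil j)) ^ 2)
          = (d:ℝ)*(∑ i' : Fin n, ∑ j : Fin d, (a i j * (x' i' j - xtil j) - m)^2)
            + (n:ℝ)*(d:ℝ)*(∑ j' : Fin d, (a i j' * (xt j' - xtil j') - m)^2) := by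
        have e : ∀ (i' : Fin n) (j j' : Fin d),
            (a i j' * (xt j' - xtil j') - a i j * (x' i' j - xtil j)) ^ 2
            = (a i j' * (xt j' - xtil j') - m)^2
              - 2*((a i j' * (xt j' - xtil j') - m)*(a i j * (x' i' j - xtil j) - m))
              + (a i j * (x' i' j - xtil j) - m)^2 := by intros; ring
        calc (∑ i' : Fin n, ∑ j : Fin d, ∑ j' : Fin d,
            (a i j' * (xt j' - xtil j') - a i j * (x' i' j - xtil j)) ^ 2)
            = (∑ i' : Fin n, ∑ j : Fin d, ∑ j' : Fin d, (a i j' * (xt j' - xtil j') - m)^2)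
              - 2*(∑ i' : Fin n, ∑ j : Fin d, ∑ j' : Fin d,
                  ((a i j' * (xt j' - xtil j') - m)*(a i j * (x' i' j - xtil j) - m)))
              + (∑ i' : Fin n, ∑ j : Fin d, ∑ j' : Fin d, (a i j * (x' i' j - xtil j) - m)^2) := by
              simp only [e, Finset.sum_add_distrib, Finset.sum_sub_distrib, ← Finset.mul_sum]
          _ = (∑ i' : Fin n, ∑ j : Fin d, ∑ j' : Fin d, (a i j' * (xt j' - xtil j') - m)^2)
              + (∑ i' : Fin n, ∑ j : Fin d, ∑ j' : Fin d, (a i j * (x' i' j - xtil j) - m)^2) := by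
              rw [hcross]; ring
          _ = (d:ℝ)*(∑ i' : Fin n, ∑ j : Fin d, (a i j * (x' i' j - xtil j) - m)^2)
              + (n:ℝ)*(d:ℝ)*(∑ j' : Fin d, (a i j' * (xt j' - xtil j') - m)^2) := by
              simp only [Finset.sum_const, Finset.card_univ, Fintype.card_fin,
                nsmul_eq_mul, ← Finset.mul_sum]
              ring
      have hA : (∑ i' : Fin n, ∑ j : Fin d, (a i j * (x' i' j - xtil j) - m)^2)
          ≤ (4/3)*(n:ℝ)*(∑ j0 : Fin d, (a i j0 * (xt j0 - xtil j0) - m)^2)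
            + 4*(∑ i'0 : Fin n, ∑ j0 : Fin d, (a i j0)^2*(xt j0 - x' i'0 j0)^2) := by
        have e : ∀ (i' : Fin n) (j : Fin d), (a i j * (x' i' j - xtil j) - m)^2
            ≤ (4/3)*(a i j * (xt j - xtil j) - m)^2 + 4*((a i j)^2*(xt j - x' i' j)^2) := by
          intro i' j
          linarith only [sq_nonneg ((a i j * (xt j - xtil j) - m)
            - 3*(a i j * (x' i' j - xt j)))]
        calc (∑ i' : Fin n, ∑ j : Fin d, (a i j * (x' i' j - xtil j) - m)^2)
            ≤ ∑ i' : Fin n, ∑ j : Fin d, ((4/3)*(a i j * (xt j - xtil j) - m)^2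
                + 4*((a i j)^2*(xt j - x' i' j)^2)) :=
              Finset.sum_le_sum fun i' _ => Finset.sum_le_sum fun j _ => e i' j
          _ = (4/3)*(n:ℝ)*(∑ j0 : Fin d, (a i j0 * (xt j0 - xtil j0) - m)^2)
              + 4*(∑ i'0 : Fin n, ∑ j0 : Fin d, (a i j0)^2*(xt j0 - x' i'0 j0)^2) := by
              simp only [Finset.sum_add_distrib, Finset.sum_const, Finset.card_univ,
                Fintype.card_fin, nsmul_eq_mul, ← Finset.mul_sum]
              ring
      have hB : (∑ j0 : Fin d, (a i j0 * (xt j0 - xtil j0) - m)^2)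
          ≤ ∑ j0 : Fin d, (a i j0 * (xt j0 - xtil j0))^2 := by
        have e2 : ∀ j0 : Fin d, (a i j0 * (xt j0 - xtil j0) - m)^2
            = (a i j0 * (xt j0 - xtil j0))^2 - 2*m*(a i j0 * (xt j0 - xtil j0)) + m^2 := by
          intro; ring
        have e3 : (∑ j0 : Fin d, (a i j0 * (xt j0 - xtil j0) - m)^2)
            = (∑ j0 : Fin d, (a i j0 * (xt j0 - xtil j0))^2)
              - 2*m*(∑ j0 : Fin d, a i j0 * (xt j0 - xtil j0)) + (d:ℝ)*m^2 := by
          calc (∑ j0 : Fin d, (a i j0 * (xt j0 - xtil j0) - m)^2)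
              = ∑ j0 : Fin d, ((a i j0 * (xt j0 - xtil j0))^2
                  - 2*m*(a i j0 * (xt j0 - xtil j0)) + m^2) := by simp only [e2]
            _ = (∑ j0 : Fin d, (a i j0 * (xt j0 - xtil j0))^2)
              - 2*m*(∑ j0 : Fin d, a i j0 * (xt j0 - xtil j0)) + (d:ℝ)*m^2 := by
                simp only [Finset.sum_add_distrib, Finset.sum_sub_distrib, Finset.sum_const,
                  Finset.card_univ, Fintype.card_fin, nsmul_eq_mul, ← Finset.mul_sum]
        rw [e3, hXsum]
        have : (0:ℝ) ≤ (d:ℝ)*m^2 := mul_nonneg (le_of_lt hd0) (sq_nonneg m)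
        linarith only [this]
      have mA := mul_le_mul_of_nonneg_left hA (le_of_lt hd0)
      have mB := mul_le_mul_of_nonneg_left hB
        (by positivity : (0:ℝ) ≤ (n:ℝ)*(d:ℝ))
      linarith only [expand, mA, mB]
    have step : SWW ≤ ∑ i : Fin n, ((7/3)*((n:ℝ)*(d:ℝ))*(∑ j0 : Fin d, (a i j0 * (xt j0 - xtil j0))^2)
          + 4*(d:ℝ)*(∑ i'0 : Fin n, ∑ j0 : Fin d, (a i j0)^2 * (xt j0 - x' i'0 j0)^2)) := by
      rw [hSWWe]
      exact Finset.sum_le_sum fun i _ => peri i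
    have hrow2 : (∑ i : Fin n, ∑ j0 : Fin d, (a i j0 * (xt j0 - xtil j0))^2) ≤ R'^2 * Sxt := by
      rw [Finset.sum_comm]
      calc (∑ j0 : Fin d, ∑ i : Fin n, (a i j0 * (xt j0 - xtil j0))^2)
          = ∑ j0 : Fin d, (∑ i : Fin n, (a i j0)^2) * (xt j0 - xtil j0)^2 := by
            refine Finset.sum_congr rfl fun j0 _ => ?_
            rw [Finset.sum_mul]
            exact Finset.sum_congr rfl fun i _ => by ring
        _ ≤ ∑ j0 : Fin d, R'^2 * (xt j0 - xtil j0)^2 :=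
            Finset.sum_le_sum fun j0 _ =>
              mul_le_mul_of_nonneg_right (colsq j0) (sq_nonneg _)
        _ = R'^2 * Sxt := by rw [hSxte]; exact (Finset.mul_sum _ _ _).symm
    have hcol2 : (∑ i : Fin n, ∑ i'0 : Fin n, ∑ j0 : Fin d,
        (a i j0)^2 * (xt j0 - x' i'0 j0)^2) ≤ R'^2 * Sp := by
      rw [comm3_rot (fun i i'0 j0 => (a i j0)^2 * (xt j0 - x' i'0 j0)^2)]
      calc (∑ i'0 : Fin n, ∑ j0 : Fin d, ∑ i : Fin n, (a i j0)^2 * (xt j0 - x' i'0 j0)^2)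
          = ∑ i'0 : Fin n, ∑ j0 : Fin d, (∑ i : Fin n, (a i j0)^2) * (xt j0 - x' i'0 j0)^2 := by
            refine Finset.sum_congr rfl fun i'0 _ => Finset.sum_congr rfl fun j0 _ => ?_
            exact (Finset.sum_mul _ _ _).symm
        _ ≤ ∑ i'0 : Fin n, ∑ j0 : Fin d, R'^2 * (xt j0 - x' i'0 j0)^2 :=
            Finset.sum_le_sum fun i'0 _ => Finset.sum_le_sum fun j0 _ =>
              mul_le_mul_of_nonneg_right (colsq j0) (sq_nonneg _)
        _ = R'^2 * Sp := by
            rw [hSpe, Finset.mul_sum]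
            exact Finset.sum_congr rfl fun i'0 _ => (Finset.mul_sum _ _ _).symm
    have split : (∑ i : Fin n, ((7/3)*((n:ℝ)*(d:ℝ))*(∑ j0 : Fin d, (a i j0 * (xt j0 - xtil j0))^2)
          + 4*(d:ℝ)*(∑ i'0 : Fin n, ∑ j0 : Fin d, (a i j0)^2 * (xt j0 - x' i'0 j0)^2)))
        = (7/3)*((n:ℝ)*(d:ℝ))*(∑ i : Fin n, ∑ j0 : Fin d, (a i j0 * (xt j0 - xtil j0))^2)
          + 4*(d:ℝ)*(∑ i : Fin n, ∑ i'0 : Fin n, ∑ j0 : Fin d,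
              (a i j0)^2 * (xt j0 - x' i'0 j0)^2) := by
      simp only [Finset.sum_add_distrib, ← Finset.mul_sum]
    have m1 := mul_le_mul_of_nonneg_left hrow2 (by positivity : (0:ℝ) ≤ (7/3)*((n:ℝ)*(d:ℝ)))
    have m2 := mul_le_mul_of_nonneg_left hcol2 (by positivity : (0:ℝ) ≤ 4*(d:ℝ))
    linarith only [step, split, m1, m2]
  -- Young splits of the snapshot distances
  have hSytb : Syt ≤ (5/2)*Syy + (5/3)*Syty := by
    rw [hSyte, hSyye, hSytye]
    calc (∑ k, (yt k - ytil k)^2)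
        ≤ ∑ k, ((5/2)*(yt k - y k)^2 + (5/3)*(ytil k - y k)^2) :=
          Finset.sum_le_sum fun k _ => by
            linarith only [sq_nonneg ((yt k - y k) + (2/3)*(ytil k - y k))]
      _ = (5/2)*(∑ k, (yt k - y k)^2) + (5/3)*(∑ k, (ytil k - y k)^2) := by
          rw [Finset.sum_add_distrib, ← Finset.mul_sum, ← Finset.mul_sum]
  have hSxtb : Sxt ≤ (5/2)*Sxx + (5/3)*Sxtx := by
    rw [hSxte, hSxxe, hSxtxe]
    calc (∑ k, (xt k - xtil k)^2)
        ≤ ∑ k, ((5/2)*(xt k - x k)^2 + (5/3)*(xtil k - x k)^2) :=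
          Finset.sum_le_sum fun k _ => by
            linarith only [sq_nonneg ((xt k - x k) + (2/3)*(xtil k - x k))]
      _ = (5/2)*(∑ k, (xt k - x k)^2) + (5/3)*(∑ k, (xtil k - x k)^2) := by
          rw [Finset.sum_add_distrib, ← Finset.mul_sum, ← Finset.mul_sum]
  have hslack1 : SVV ≤ R^2*((35/6)*((n:ℝ)*(d:ℝ))*Syy + (35/9)*((n:ℝ)*(d:ℝ))*Syty + 4*(n:ℝ)*Sq) := by
    refine le_trans hSVVb ?_
    have hf : (0:ℝ) ≤ (7/3)*((n:ℝ)*(d:ℝ))*R^2*((5/2)*Syy + (5/3)*Syty - Syt) :=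
      mul_nonneg (by positivity) (by linarith only [hSytb])
    linarith only [hf]
  have hslack2 : SWW ≤ R'^2*((35/6)*((n:ℝ)*(d:ℝ))*Sxx + (35/9)*((n:ℝ)*(d:ℝ))*Sxtx + 4*(d:ℝ)*Sp) := by
    refine le_trans hSWWb ?_
    have hf : (0:ℝ) ≤ (7/3)*((n:ℝ)*(d:ℝ))*R'^2*((5/2)*Sxx + (5/3)*Sxtx - Sxt) :=
      mul_nonneg (by positivity) (by linarith only [hSxtb])
    linarith only [hf]
  -- combine
  have hKEY : LSUM ≤ (1/(2*η))*((1 - η*μ/4)*((n:ℝ)^2*(d:ℝ))*Sxx) - (1/(2*η))*SU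
        - (1/(2*η))*((1/2)*((n:ℝ)*(d:ℝ))*Sp)
      + (1/(2*τ))*((1 - τ*γ/(4*(d:ℝ)))*((n:ℝ)*(d:ℝ)^2)*Syy) - (1/(2*τ))*SR2
        - (1/(2*τ))*((1/2)*((n:ℝ)*(d:ℝ))*Sq)
      + η*(R^2*((35/6)*((n:ℝ)*(d:ℝ))*Syy + (35/9)*((n:ℝ)*(d:ℝ))*Syty + 4*(n:ℝ)*Sq))
      + τ*(R'^2*((35/6)*((n:ℝ)*(d:ℝ))*Sxx + (35/9)*((n:ℝ)*(d:ℝ))*Sxtx + 4*(d:ℝ)*Sp)) := by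
    have h1 := hMsum
    rw [hRagg] at h1
    have h2 := mul_le_mul_of_nonneg_left hslack1 hη.le
    have h3 := mul_le_mul_of_nonneg_left hslack2 hτ.le
    linarith only [h1, h2, h3]
  -- final assembly
  rw [hLagg, hS2, hS3]
  have e0 : (1 / (d : ℝ)) * (((d:ℝ) * LSUM) / ((n : ℝ) ^ 2 * (d : ℝ) ^ 2))
      = LSUM / ((n : ℝ) ^ 2 * (d : ℝ) ^ 2) := by field_simp
  rw [e0]
  have e2 : (1 / (2 * η)) *
      ((((n:ℝ)^2*(d:ℝ)^2)*(1 - η * μ / (4 * (d : ℝ)) + 12 * R' ^ 2 * η * τ / ((n : ℝ) * (d : ℝ)))*Sxx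
        - (((n:ℝ)^2*(d:ℝ)^2)*Sxx - ((n:ℝ)^2*(d:ℝ))*Sxx + SU)
        - (1 / 2 - 8 * η * τ * R' ^ 2 / (n : ℝ))*(((n:ℝ)*(d:ℝ))*Sp)) / ((n : ℝ) ^ 2 * (d : ℝ) ^ 2))
      = ((1/(2*η))*((1 - η*μ/4)*((n:ℝ)^2*(d:ℝ))*Sxx) - (1/(2*η))*SU
          - (1/(2*η))*((1/2)*((n:ℝ)*(d:ℝ))*Sp)
          + 6*((n:ℝ)*(d:ℝ))*τ*R'^2*Sxx + 4*(d:ℝ)*τ*R'^2*Sp) / ((n : ℝ) ^ 2 * (d : ℝ) ^ 2) := by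
    field_simp
    ring
  have e3 : (1 / (2 * τ)) *
      ((((n:ℝ)^2*(d:ℝ)^2)*(1 - τ * γ / (4 * (n : ℝ) * (d : ℝ)) + 12 * R ^ 2 * η * τ / ((n : ℝ) * (d : ℝ)))*Syy
        - (((n:ℝ)^2*(d:ℝ)^2)*Syy - ((n:ℝ)*(d:ℝ)^2)*Syy + SR2)
        - (1 / 2 - 8 * η * τ * R ^ 2 / (d : ℝ))*(((n:ℝ)*(d:ℝ))*Sq)) / ((n : ℝ) ^ 2 * (d : ℝ) ^ 2))
      = ((1/(2*τ))*((1 - τ*γ/(4*(d:ℝ)))*((n:ℝ)*(d:ℝ)^2)*Syy) - (1/(2*τ))*SR2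
          - (1/(2*τ))*((1/2)*((n:ℝ)*(d:ℝ))*Sq)
          + 6*((n:ℝ)*(d:ℝ))*η*R^2*Syy + 4*(n:ℝ)*η*R^2*Sq) / ((n : ℝ) ^ 2 * (d : ℝ) ^ 2) := by
    field_simp
    ring
  rw [e2, e3, ← add_div]
  have e4 : LSUM / ((n : ℝ) ^ 2 * (d : ℝ) ^ 2)
        - 4 * η * R ^ 2 / ((n : ℝ) * (d : ℝ)) * Syty
        - 4 * τ * R' ^ 2 / ((n : ℝ) * (d : ℝ)) * Sxtx
      = (LSUM - 4*((n:ℝ)*(d:ℝ))*η*R^2*Syty - 4*((n:ℝ)*(d:ℝ))*τ*R'^2*Sxtx)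
          / ((n : ℝ) ^ 2 * (d : ℝ) ^ 2) := by
    field_simp
  rw [e4]
  rw [div_le_div_iff₀ hN hN]
  have m1 : (0:ℝ) ≤ ((n:ℝ)*(d:ℝ))*η*R^2*Syy :=
    mul_nonneg (mul_nonneg (mul_nonneg (by positivity) hη.le) (sq_nonneg R)) hSyy0
  have m2 : (0:ℝ) ≤ ((n:ℝ)*(d:ℝ))*η*R^2*Syty :=
    mul_nonneg (mul_nonneg (mul_nonneg (by positivity) hη.le) (sq_nonneg R)) hSyty0
  have m3 : (0:ℝ) ≤ ((n:ℝ)*(d:ℝ))*τ*R'^2*Sxx :=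
    mul_nonneg (mul_nonneg (mul_nonneg (by positivity) hτ.le) (sq_nonneg R')) hSxx0
  have m4 : (0:ℝ) ≤ ((n:ℝ)*(d:ℝ))*τ*R'^2*Sxtx :=
    mul_nonneg (mul_nonneg (mul_nonneg (by positivity) hτ.le) (sq_nonneg R')) hSxtx0
  have hnum : LSUM - 4*((n:ℝ)*(d:ℝ))*η*R^2*Syty - 4*((n:ℝ)*(d:ℝ))*τ*R'^2*Sxtx
      ≤ (1/(2*η))*((1 - η*μ/4)*((n:ℝ)^2*(d:ℝ))*Sxx) - (1/(2*η))*SU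
          - (1/(2*η))*((1/2)*((n:ℝ)*(d:ℝ))*Sp)
          + 6*((n:ℝ)*(d:ℝ))*τ*R'^2*Sxx + 4*(d:ℝ)*τ*R'^2*Sp
        + ((1/(2*τ))*((1 - τ*γ/(4*(d:ℝ)))*((n:ℝ)*(d:ℝ)^2)*Syy) - (1/(2*τ))*SR2
          - (1/(2*τ))*((1/2)*((n:ℝ)*(d:ℝ))*Sq)
          + 6*((n:ℝ)*(d:ℝ))*η*R^2*Syy + 4*(n:ℝ)*η*R^2*Sq) := by
    linarith only [hKEY, m1, m2, m3, m4]
  exact mul_le_mul_of_nonneg_right hnum (le_of_lt hN)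
end

section
/- (Deterministic proximal descent inequality) Let X_j ⊆ ℝ be convex and closed, g_j : X_j → ℝ convex, closed and μ-strongly convex (μ ≥ 0), η > 0, a ∈ ℝ, and w ∈ ℝ with |w| ≤ L. Let u ∈ X_j and u' = prox_{η g_j}(u − η·a·w), the proximal step taken over X_j. Then for every x_j ∈ X_j: (1/(2η))·[(1 − min{ημ/2, 1/4})(u − x_j)² − (u' − x_j)²] ≥ a·w·(u − x_j) + g_j(u') − g_j(x_j) − η·L²·a². -/
set_option maxHeartbeats 1000000


/-- Deterministic proximal descent inequality: for `X_j ⊆ ℝ` convex closed,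
`g_j` convex, closed and `μ`-strongly convex (`μ ≥ 0`), `η > 0`, `|w| ≤ L`, `u ∈ X_j`
and `u' = prox_{η g_j}(u − η·a·w)` (taken over `X_j`), every `x_j ∈ X_j` satisfies
`(1/(2η))[(1 − min{ημ/2, 1/4})(u − x_j)² − (u' − x_j)²]
  ≥ a·w·(u − x_j) + g_j(u') − g_j(x_j) − η·L²·a²`. -/
theorem stmt_9 (Xj : Set ℝ) (hXjconv : Convex ℝ Xj) (hXjcl : IsClosed Xj)
    (gj : ℝ → ℝ) (hgconv : ConvexOn ℝ Xj gj) (hglsc : LowerSemicontinuousOn gj Xj)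
    (μ : ℝ) (hμ : 0 ≤ μ)
    (hstrong : ConvexOn ℝ Xj (fun z => gj z - μ / 2 * z ^ 2))
    (η : ℝ) (hη : 0 < η) (a w L : ℝ) (hw : |w| ≤ L)
    (u : ℝ) (hu : u ∈ Xj) (u' : ℝ) (hu' : u' ∈ Xj)
    (hprox : ∀ z ∈ Xj,
      η * gj u' + (u' - (u - η * (a * w))) ^ 2 / 2
        ≤ η * gj z + (z - (u - η * (a * w))) ^ 2 / 2) :
    ∀ xj ∈ Xj,
      a * w * (u - xj) + gj u' - gj xj - η * L ^ 2 * a ^ 2 ≤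
        (1 / (2 * η)) * ((1 - min (η * μ / 2) (1 / 4)) * (u - xj) ^ 2 - (u' - xj) ^ 2) := by
  intro x hx
  -- strong proximal inequality
  have hmain : ∀ t ∈ Set.Ioc (0:ℝ) 1,
      (1 + η*μ)/2 * (1 - t) * (x - u')^2
        ≤ (η * gj x + (x - (u - η * (a * w)))^2/2) - (η * gj u' + (u' - (u - η * (a * w)))^2/2) := by
    intro t ht
    obtain ⟨ht0, ht1⟩ := ht
    have hz : (1 - t) * u' + t * x ∈ Xj := by
      have := hXjconv hu' hx (by linarith : (0:ℝ) ≤ 1 - t) ht0.le (by ring)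
      simpa using this
    have hcv := hstrong.2 hu' hx (by linarith : (0:ℝ) ≤ 1 - t) ht0.le (by ring)
    simp only [smul_eq_mul] at hcv
    have hpr := hprox _ hz
    have hcv' := mul_le_mul_of_nonneg_left hcv hη.le
    have h1 : t * ((1 + η*μ)/2 * (1 - t) * (x - u')^2)
        ≤ t * ((η * gj x + (x - (u - η * (a * w)))^2/2) - (η * gj u' + (u' - (u - η * (a * w)))^2/2)) := by
      nlinarith [hpr, hcv']
    nlinarith [h1, ht0]
  have hD : (0:ℝ) ≤ (η * gj x + (x - (u - η * (a * w)))^2/2) - (η * gj u' + (u' - (u - η * (a * w)))^2/2) := by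
    have := hprox x hx
    linarith
  have key : (1 + η*μ)/2 * (x - u')^2
      ≤ (η * gj x + (x - (u - η * (a * w)))^2/2) - (η * gj u' + (u' - (u - η * (a * w)))^2/2) := by
    have htend : Filter.Tendsto (fun t : ℝ => (1 + η*μ)/2 * (1 - t) * (x - u')^2)
        (nhdsWithin 0 (Set.Ioi 0)) (nhds ((1 + η*μ)/2 * (1 - 0) * (x - u')^2)) := by
      apply Filter.Tendsto.mono_left _ nhdsWithin_le_nhds
      exact (Continuous.tendsto (by continuity) 0)
    have hev : ∀ᶠ t in nhdsWithin (0:ℝ) (Set.Ioi 0),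
        (1 + η*μ)/2 * (1 - t) * (x - u')^2
          ≤ (η * gj x + (x - (u - η * (a * w)))^2/2) - (η * gj u' + (u' - (u - η * (a * w)))^2/2) :=
      Filter.eventually_of_mem (Ioc_mem_nhdsGT_of_mem ⟨le_refl 0, zero_lt_one⟩) hmain
    have := le_of_tendsto htend hev
    linarith [this]
  -- Young / bound on w
  have hw2 : w^2 ≤ L^2 := sq_le_sq' (neg_le_of_abs_le hw) (le_of_abs_le hw)
  have hwa : η^2*a^2*w^2 ≤ η^2*a^2*L^2 :=
    mul_le_mul_of_nonneg_left hw2 (by positivity)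
  have hYoung : 2*η*(a*w)*(u - u') ≤ 2*η^2*a^2*L^2 + (u - u')^2/2 := by
    nlinarith [sq_nonneg (2*η*(a*w) - (u - u')), hwa]
  have key2 : 2*η*(gj u' - gj x) + (1 + η*μ)*(x - u')^2
      ≤ (x - u)^2 - (u' - u)^2 + 2*η*(a*w)*(x - u') := by
    nlinarith [key]
  rw [one_div, inv_mul_eq_div, le_div_iff₀ (by positivity : (0:ℝ) < 2*η)]
  rcases le_total (η * μ / 2) (1/4 : ℝ) with h | h
  · rw [min_eq_left h]
    nlinarith [key2, hYoung, mul_nonneg (mul_nonneg hη.le hμ) (sq_nonneg (u + x - 2*u')),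
      mul_nonneg (by linarith : (0:ℝ) ≤ 1/2 - η*μ) (sq_nonneg (u - u'))]
  · rw [min_eq_right h]
    nlinarith [key2, hYoung, sq_nonneg (u + x - 2*u'),
      mul_nonneg (by nlinarith : (0:ℝ) ≤ η*μ - 1/2) (sq_nonneg (x - u'))]
end
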